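/- For n = 3 (so N = 8), let W = (1/√3)(e_1 + e_2 + e_4) be the 3-qubit W state (i.e. (|001⟩+|010⟩+|100⟩)/√3). Then the quantum Fourier transform of W is SLOCC-equivalent to GHZ_3; in particular QFT(W) is not in the SLOCC orbit of W. -/

import Mathlib

open scoped BigOperators

noncomputable section

/-- `bit n i x` is the i-th binary digit of `x`, counted from the most significant. -/
def bit (n : ℕ) (i : Fin n) (x : Fin (2^n)) : Fin 2 :=
  ⟨((x : ℕ) / 2^(n - 1 - (i : ℕ))) % 2, Nat.mod_lt _ (by norm_num)⟩

/-- An n-qubit state is separable if its amplitudes factor as a product over the qubits. -/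
def Separable (n : ℕ) (ψ : Fin (2^n) → ℂ) : Prop :=
  ∃ v : Fin n → Fin 2 → ℂ, ∀ x, ψ x = ∏ i, v i (bit n i x)

/-- The periodic state with shift `l` and period `r`:
amplitude `1/√A` at `x = l + i·r` for `0 ≤ i < A`, with `A = ⌈(2^n - l)/r⌉`. -/
def periodicState (n l r : ℕ) : Fin (2^n) → ℂ := fun x =>
  if ∃ i < (2^n - l + r - 1) / r, (x : ℕ) = l + i * r
  then (1 : ℂ) / Real.sqrt (((2^n - l + r - 1) / r : ℕ)) else 0

/-- Quantum Fourier transform of an n-qubit state. -/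
def QFT (n : ℕ) (ψ : Fin (2^n) → ℂ) : Fin (2^n) → ℂ := fun y =>
  (1 / (Real.sqrt (2^n) : ℝ) : ℂ) * ∑ x : Fin (2^n),
    Complex.exp (2 * Real.pi * Complex.I * (x : ℕ) * (y : ℕ) / ((2^n : ℕ) : ℂ)) * ψ x

/-- The generalized GHZ state. -/
def GHZ (n : ℕ) : Fin (2^n) → ℂ := fun x =>
  if (x : ℕ) = 0 ∨ (x : ℕ) = 2^n - 1 then (1 : ℂ) / Real.sqrt 2 else 0

/-- SLOCC equivalence of two n-qubit states. -/
def SLOCCEquiv (n : ℕ) (ψ φ : Fin (2^n) → ℂ) : Prop :=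
  ∃ (g : Fin n → Matrix (Fin 2) (Fin 2) ℂ) (c : ℂ),
    c ≠ 0 ∧ (∀ i, IsUnit (g i)) ∧
    ∀ x, φ x = c * ∑ y : Fin (2^n), (∏ i, g i (bit n i x) (bit n i y)) * ψ y

/-- The 3-qubit W state `(|001⟩+|010⟩+|100⟩)/√3`. -/
def W3 : Fin (2^3) → ℂ := fun x =>
  if (x : ℕ) = 1 ∨ (x : ℕ) = 2 ∨ (x : ℕ) = 4 then (1 : ℂ) / Real.sqrt 3 else 0

namespace aux
open Complex
def s2 : ℂ := (Real.sqrt 2 : ℝ)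
def s3 : ℂ := (Real.sqrt 3 : ℝ)
def w : ℂ := (1+Complex.I)*s2/2
lemma wdef : w = (1+Complex.I)*s2/2 := rfl
lemma hs2 : s2^2 = 2 := by
  rw [s2]; norm_cast; rw [Real.sq_sqrt]; norm_num
lemma hs3 : s3^2 = 3 := by
  rw [s3]; norm_cast; rw [Real.sq_sqrt]; norm_num
lemma hs2ne : s2 ≠ 0 := by
  intro h; have := hs2; rw [h] at this; norm_num at this
lemma hs3ne : s3 ≠ 0 := by
  intro h; have := hs3; rw [h] at this; norm_num at this
lemma hw2 : w^2 = Complex.I := by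
  rw [w]; field_simp; linear_combination 2*Complex.I*hs2 + s2^2*Complex.I_sq
lemma hexp (m : ℕ) : Complex.exp (2*Real.pi*Complex.I*(m:ℂ)/8) = w^m := by
  have h : (2*Real.pi*Complex.I*(m:ℂ)/8) = (m:ℕ) * ((Real.pi/4 : ℝ) * Complex.I) := by
    push_cast; ring
  rw [h, Complex.exp_nat_mul, Complex.exp_mul_I]
  norm_cast
  rw [Real.cos_pi_div_four, Real.sin_pi_div_four, w, s2]
  push_cast
  ring_nf
lemma hsum (f : Fin (2^3) → ℂ) : ∑ y, f y = f 0 + f 1 + f 2 + f 3 + f 4 + f 5 + f 6 + f 7 :=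
  Fin.sum_univ_eight f
lemma sqrt8 : ((Real.sqrt 8 : ℝ) : ℂ) = 2 * s2 := by
  rw [show (8:ℝ) = 2^2 * 2 by norm_num, Real.sqrt_mul (by positivity), Real.sqrt_sq (by norm_num)]
  push_cast [s2]; ring
lemma inv2 : ((Real.sqrt 2:ℝ):ℂ)⁻¹ = s2/2 := by
  rw [show ((Real.sqrt 2:ℝ):ℂ) = s2 from rfl, eq_div_iff (by norm_num : (2:ℂ) ≠ 0),
    inv_mul_eq_div, div_eq_iff hs2ne]
  linear_combination -hs2
lemma inv2' : (1:ℂ)/((Real.sqrt 2:ℝ):ℂ) = s2/2 := by rw [one_div, inv2]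
lemma psi_val (y : Fin (2^3)) :
    QFT 3 W3 y = s2*s3/12 * (w^(y:ℕ) + Complex.I^(y:ℕ) + (-1:ℂ)^(y:ℕ)) := by
  rw [QFT, hsum]
  simp only [W3]
  norm_num
  norm_num
  rw [show (2 * (Real.pi:ℂ) * Complex.I * 2 * ((y:ℕ):ℂ) / 8) = 2*Real.pi*Complex.I*((2*(y:ℕ):ℕ):ℂ)/8 by push_cast; ring]
  rw [show (2 * (Real.pi:ℂ) * Complex.I * 4 * ((y:ℕ):ℂ) / 8) = 2*Real.pi*Complex.I*((4*(y:ℕ):ℕ):ℂ)/8 by push_cast; ring]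
  rw [hexp, hexp, hexp, sqrt8, pow_mul, pow_mul, hw2,
    show w^4 = -1 by rw [show (4:ℕ) = 2*2 from rfl, pow_mul, hw2]; exact Complex.I_sq]
  rw [show ((Real.sqrt 3:ℝ):ℂ) = s3 from rfl]
  have key : (s2)⁻¹*(s3)⁻¹*6 = s2*s3 := by
    have h2 := hs2ne
    have h3 := hs3ne
    field_simp
    linear_combination -s3^2*hs2 - 2*hs3
  field_simp
  ring_nf
  linear_combination 2 * (w^(y:ℕ) + Complex.I^(y:ℕ) + (-1:ℂ)^(y:ℕ)) * key
lemma bo00 : bit 3 0 (0 : Fin (2^3)) = 0 := rfl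
lemma bo01 : bit 3 0 (1 : Fin (2^3)) = 0 := rfl
lemma bo02 : bit 3 0 (2 : Fin (2^3)) = 0 := rfl
lemma bo03 : bit 3 0 (3 : Fin (2^3)) = 0 := rfl
lemma bo04 : bit 3 0 (4 : Fin (2^3)) = 1 := rfl
lemma bo05 : bit 3 0 (5 : Fin (2^3)) = 1 := rfl
lemma bo06 : bit 3 0 (6 : Fin (2^3)) = 1 := rfl
lemma bo07 : bit 3 0 (7 : Fin (2^3)) = 1 := rfl
lemma bo10 : bit 3 1 (0 : Fin (2^3)) = 0 := rfl
lemma bo11 : bit 3 1 (1 : Fin (2^3)) = 0 := rfl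
lemma bo12 : bit 3 1 (2 : Fin (2^3)) = 1 := rfl
lemma bo13 : bit 3 1 (3 : Fin (2^3)) = 1 := rfl
lemma bo14 : bit 3 1 (4 : Fin (2^3)) = 0 := rfl
lemma bo15 : bit 3 1 (5 : Fin (2^3)) = 0 := rfl
lemma bo16 : bit 3 1 (6 : Fin (2^3)) = 1 := rfl
lemma bo17 : bit 3 1 (7 : Fin (2^3)) = 1 := rfl
lemma bo20 : bit 3 2 (0 : Fin (2^3)) = 0 := rfl
lemma bo21 : bit 3 2 (1 : Fin (2^3)) = 1 := rfl
lemma bo22 : bit 3 2 (2 : Fin (2^3)) = 0 := rfl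
lemma bo23 : bit 3 2 (3 : Fin (2^3)) = 1 := rfl
lemma bo24 : bit 3 2 (4 : Fin (2^3)) = 0 := rfl
lemma bo25 : bit 3 2 (5 : Fin (2^3)) = 1 := rfl
lemma bo26 : bit 3 2 (6 : Fin (2^3)) = 0 := rfl
lemma bo27 : bit 3 2 (7 : Fin (2^3)) = 1 := rfl
lemma vo0 : ((0 : Fin (2^3)) : ℕ) = 0 := rfl
lemma vo1 : ((1 : Fin (2^3)) : ℕ) = 1 := rfl
lemma vo2 : ((2 : Fin (2^3)) : ℕ) = 2 := rfl
lemma vo3 : ((3 : Fin (2^3)) : ℕ) = 3 := rfl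
lemma vo4 : ((4 : Fin (2^3)) : ℕ) = 4 := rfl
lemma vo5 : ((5 : Fin (2^3)) : ℕ) = 5 := rfl
lemma vo6 : ((6 : Fin (2^3)) : ℕ) = 6 := rfl
lemma vo7 : ((7 : Fin (2^3)) : ℕ) = 7 := rfl
lemma ghz0 : GHZ 3 (0 : Fin (2^3)) = s2/2 := by
  rw [GHZ]; norm_num [vo0, inv2, inv2']
lemma ghz1 : GHZ 3 (1 : Fin (2^3)) = 0 := by
  rw [GHZ]; norm_num [vo1, inv2, inv2']
lemma ghz2 : GHZ 3 (2 : Fin (2^3)) = 0 := by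
  rw [GHZ]; norm_num [vo2, inv2, inv2']
lemma ghz3 : GHZ 3 (3 : Fin (2^3)) = 0 := by
  rw [GHZ]; norm_num [vo3, inv2, inv2']
lemma ghz4 : GHZ 3 (4 : Fin (2^3)) = 0 := by
  rw [GHZ]; norm_num [vo4, inv2, inv2']
lemma ghz5 : GHZ 3 (5 : Fin (2^3)) = 0 := by
  rw [GHZ]; norm_num [vo5, inv2, inv2']
lemma ghz6 : GHZ 3 (6 : Fin (2^3)) = 0 := by
  rw [GHZ]; norm_num [vo6, inv2, inv2']
lemma ghz7 : GHZ 3 (7 : Fin (2^3)) = s2/2 := by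
  rw [GHZ]; norm_num [vo7, inv2, inv2']
lemma unitA : IsUnit (!![s2,-s2; 1-s2*Complex.I, 1+s2*Complex.I]) := by
  rw [Matrix.isUnit_iff_isUnit_det, Matrix.det_fin_two_of, isUnit_iff_ne_zero]
  intro h; apply hs2ne; linear_combination h/2
lemma unitB : IsUnit (!![(1:ℂ), Complex.I-s2; -Complex.I, 1]) := by
  rw [Matrix.isUnit_iff_isUnit_det, Matrix.det_fin_two_of, isUnit_iff_ne_zero]
  intro h; apply hs2ne; linear_combination Complex.I*h + (s2 - Complex.I)*Complex.I_sq
lemma unitC : IsUnit (!![(0:ℂ), s2; 1+Complex.I, -s2]) := by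
  rw [Matrix.isUnit_iff_isUnit_det, Matrix.det_fin_two_of, isUnit_iff_ne_zero]
  intro h; apply hs2ne; linear_combination (Complex.I-1)/2*h + s2/2*Complex.I_sq
lemma case0 : GHZ 3 (0 : Fin (2^3)) = s3*(1+Complex.I)/4 *
    ∑ y : Fin (2^3), (∏ i : Fin 3, ![ !![s2,-s2; 1-s2*Complex.I, 1+s2*Complex.I], !![1, Complex.I-s2; -Complex.I, 1], !![0, s2; 1+Complex.I, -s2] ] i (bit 3 i (0 : Fin (2^3))) (bit 3 i y)) * QFT 3 W3 y := by
  rw [ghz0, hsum]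
  simp only [Fin.prod_univ_three, psi_val, bo00, bo01, bo02, bo03, bo04, bo05, bo06, bo07, bo10, bo11, bo12, bo13, bo14, bo15, bo16, bo17, bo20, bo21, bo22, bo23, bo24, bo25, bo26, bo27, vo0, vo1, vo2, vo3, vo4, vo5, vo6, vo7, wdef, Matrix.cons_val', Matrix.cons_val_zero, Matrix.cons_val_one, Matrix.cons_val_two, Matrix.tail_cons, Matrix.head_cons, Matrix.head_fin_const, Matrix.empty_val', Matrix.cons_val_fin_one, Matrix.of_apply]
  linear_combination ((-1/64)*s3^2 + (-7/384)*s3^2*I + (7/192)*s3^2*I^2 + (5/32)*s3^2*I^3 + (43/192)*s3^2*I^4 + (13/64)*s3^2*I^5 + (29/192)*s3^2*I^6 + (1/32)*s3^2*I^7 + (-1/48)*s3^2*I^8 + (1/384)*s3^2*I^9 + (1/128)*s2*s3^2 + (-1/32)*s2*s3^2*I^2 + (-5/48)*s2*s3^2*I^3 + (-37/192)*s2*s3^2*I^4 + (-7/48)*s2*s3^2*I^5 + (-5/96)*s2*s3^2*I^6 + (-1/48)*s2*s3^2*I^7 + (7/384)*s2*s3^2*I^8 + (1/48)*s2*s3^2*I^9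 + (-1/128)*s2^2*s3^2 + (-7/768)*s2^2*s3^2*I + (7/384)*s2^2*s3^2*I^2 + (5/64)*s2^2*s3^2*I^3 + (43/384)*s2^2*s3^2*I^4 + (13/128)*s2^2*s3^2*I^5 + (29/384)*s2^2*s3^2*I^6 + (1/64)*s2^2*s3^2*I^7 + (-1/96)*s2^2*s3^2*I^8 + (1/768)*s2^2*s3^2*I^9 + (1/256)*s2^3*s3^2 + (1/96)*s2^3*s3^2*I + (-1/192)*s2^3*s3^2*I^2 + (-5/96)*s2^3*s3^2*I^3 + (-11/128)*s2^3*s3^2*I^4 + (-7/96)*s2^3*s3^2*I^5 + (-7/192)*s2^3*s3^2*I^6 + (-1/96)*s2^3*s3^2*I^7 + (-1/768)*s2^3*s3^2*I^8 + (1/768)*s2^4*s3^2 + (3/512)*s2^4*s3^2*I + (11/768)*s2^4*s3^2*I^2 + (11/384)*s2^4*s3^2*I^3 + (35/768)*s2^4*s3^2*I^4 + (13/256)*s2^4*s3^2*I^5 + (29/768)*s2^4*s3^2*I^6 + (7/384)*s2^4*s3^2*I^7 + (1/192)*s2^4*s3^2*I^8 + (1/1536)*s2^4*s3^2*I^9 +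 (1/512)*s2^5*s3^2 + (1/192)*s2^5*s3^2*I + (-1/384)*s2^5*s3^2*I^2 + (-5/192)*s2^5*s3^2*I^3 + (-11/256)*s2^5*s3^2*I^4 + (-7/192)*s2^5*s3^2*I^5 + (-7/384)*s2^5*s3^2*I^6 + (-1/192)*s2^5*s3^2*I^7 + (-1/1536)*s2^5*s3^2*I^8 + (1/1536)*s2^6*s3^2 + (13/3072)*s2^6*s3^2*I + (19/1536)*s2^6*s3^2*I^2 + (17/768)*s2^6*s3^2*I^3 + (43/1536)*s2^6*s3^2*I^4 + (41/1536)*s2^6*s3^2*I^5 + (29/1536)*s2^6*s3^2*I^6 + (7/768)*s2^6*s3^2*I^7 + (1/384)*s2^6*s3^2*I^8 + (1/3072)*s2^6*s3^2*I^9 + (-1/3072)*s2^7*s3^2 + (-1/384)*s2^7*s3^2*I + (-7/768)*s2^7*s3^2*I^2 + (-7/384)*s2^7*s3^2*I^3 + (-35/1536)*s2^7*s3^2*I^4 + (-7/384)*s2^7*s3^2*I^5 + (-7/768)*s2^7*s3^2*I^6 + (-1/384)*s2^7*s3^2*I^7 + (-1/3072)*s2^7*s3^2*I^8 + (1/6144)*s2^8*s3^2*I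 + (1/768)*s2^8*s3^2*I^2 + (7/1536)*s2^8*s3^2*I^3 + (7/768)*s2^8*s3^2*I^4 + (35/3072)*s2^8*s3^2*I^5 + (7/768)*s2^8*s3^2*I^6 + (7/1536)*s2^8*s3^2*I^7 + (1/768)*s2^8*s3^2*I^8 + (1/6144)*s2^8*s3^2*I^9 + (-1/6144)*s2^9*s3^2 + (-1/768)*s2^9*s3^2*I + (-7/1536)*s2^9*s3^2*I^2 + (-7/768)*s2^9*s3^2*I^3 + (-35/3072)*s2^9*s3^2*I^4 + (-7/768)*s2^9*s3^2*I^5 + (-7/1536)*s2^9*s3^2*I^6 + (-1/768)*s2^9*s3^2*I^7 + (-1/6144)*s2^9*s3^2*I^8)*hs2 + ((-1/32) + (-7/192)*I + (7/96)*I^2 + (5/16)*I^3 + (43/96)*I^4 + (13/32)*I^5 + (29/96)*I^6 + (1/16)*I^7 + (-1/24)*I^8 + (1/192)*I^9 + (1/64)*s2 + (-1/16)*s2*I^2 + (-5/24)*s2*I^3 + (-37/96)*s2*I^4 + (-7/24)*s2*I^5 + (-5/48)*s2*I^6 + (-1/24)*s2*I^7 + (7/192)*s2*I^8 + (1/24)*s2*I^9)*hs3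 + ((-3/32) + (-7/64)*I + (5/16)*I^2 + (67/64)*I^3 + (33/32)*I^4 + (11/64)*I^5 + (-1/8)*I^6 + (1/64)*I^7 + (35/64)*s2 + (-47/64)*s2*I^2 + (-5/8)*s2*I^3 + (-27/64)*s2*I^4 + (-1/4)*s2*I^5 + (7/64)*s2*I^6 + (1/8)*s2*I^7)*Complex.I_sq
lemma case1 : GHZ 3 (1 : Fin (2^3)) = s3*(1+Complex.I)/4 *
    ∑ y : Fin (2^3), (∏ i : Fin 3, ![ !![s2,-s2; 1-s2*Complex.I, 1+s2*Complex.I], !![1, Complex.I-s2; -Complex.I, 1], !![0, s2; 1+Complex.I, -s2] ] i (bit 3 i (1 : Fin (2^3))) (bit 3 i y)) * QFT 3 W3 y := by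
  rw [ghz1, hsum]
  simp only [Fin.prod_univ_three, psi_val, bo00, bo01, bo02, bo03, bo04, bo05, bo06, bo07, bo10, bo11, bo12, bo13, bo14, bo15, bo16, bo17, bo20, bo21, bo22, bo23, bo24, bo25, bo26, bo27, vo0, vo1, vo2, vo3, vo4, vo5, vo6, vo7, wdef, Matrix.cons_val', Matrix.cons_val_zero, Matrix.cons_val_one, Matrix.cons_val_two, Matrix.tail_cons, Matrix.head_cons, Matrix.head_fin_const, Matrix.empty_val', Matrix.cons_val_fin_one, Matrix.of_apply]
  linear_combination ((-1/48)*s3^2 + (-1/24)*s3^2*I + (-1/48)*s3^2*I^2 + (-1/16)*s3^2*I^3 + (-1/16)*s3^2*I^4 + (1/48)*s3^2*I^5 + (1/48)*s3^2*I^6 + (1/16)*s3^2*I^7 + (1/12)*s3^2*I^8 + (1/48)*s3^2*I^9 + (1/48)*s2*s3^2*I + (1/24)*s2*s3^2*I^2 + (1/24)*s2*s3^2*I^3 + (1/24)*s2*s3^2*I^4 + (-1/24)*s2*s3^2*I^6 + (-1/24)*s2*s3^2*I^7 + (-1/24)*s2*s3^2*I^8 + (-1/48)*s2*s3^2*I^9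 + (1/96)*s2^2*s3^2 + (1/48)*s2^2*s3^2*I + (1/96)*s2^2*s3^2*I^2 + (-1/48)*s2^2*s3^2*I^3 + (-1/48)*s2^2*s3^2*I^4 + (1/48)*s2^2*s3^2*I^7 + (1/48)*s2^2*s3^2*I^8 + (1/384)*s2^4*s3^2*I + (1/96)*s2^4*s3^2*I^2 + (1/64)*s2^4*s3^2*I^3 + (1/96)*s2^4*s3^2*I^4 + (1/384)*s2^4*s3^2*I^5 + (-1/384)*s2^5*s3^2 + (-1/96)*s2^5*s3^2*I + (-1/64)*s2^5*s3^2*I^2 + (-1/96)*s2^5*s3^2*I^3 + (-1/384)*s2^5*s3^2*I^4 + (-1/1536)*s2^6*s3^2 + (-1/256)*s2^6*s3^2*I + (-5/512)*s2^6*s3^2*I^2 + (-5/384)*s2^6*s3^2*I^3 + (-5/512)*s2^6*s3^2*I^4 + (-1/256)*s2^6*s3^2*I^5 + (-1/1536)*s2^6*s3^2*I^6 + (-1/6144)*s2^8*s3^2*I + (-1/768)*s2^8*s3^2*I^2 + (-7/1536)*s2^8*s3^2*I^3 + (-7/768)*s2^8*s3^2*I^4 + (-35/3072)*s2^8*s3^2*I^5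 + (-7/768)*s2^8*s3^2*I^6 + (-7/1536)*s2^8*s3^2*I^7 + (-1/768)*s2^8*s3^2*I^8 + (-1/6144)*s2^8*s3^2*I^9 + (1/6144)*s2^9*s3^2 + (1/768)*s2^9*s3^2*I + (7/1536)*s2^9*s3^2*I^2 + (7/768)*s2^9*s3^2*I^3 + (35/3072)*s2^9*s3^2*I^4 + (7/768)*s2^9*s3^2*I^5 + (7/1536)*s2^9*s3^2*I^6 + (1/768)*s2^9*s3^2*I^7 + (1/6144)*s2^9*s3^2*I^8)*hs2 + ((-1/24) + (-1/12)*I + (-1/24)*I^2 + (-1/8)*I^3 + (-1/8)*I^4 + (1/24)*I^5 + (1/24)*I^6 + (1/8)*I^7 + (1/6)*I^8 + (1/24)*I^9 + (1/24)*s2*I + (1/12)*s2*I^2 + (1/12)*s2*I^3 + (1/12)*s2*I^4 + (-1/12)*s2*I^6 + (-1/12)*s2*I^7 + (-1/12)*s2*I^8 + (-1/24)*s2*I^9)*hs3 + ((-1/8) + (-1/4)*I + (-1/8)*I^3 + (-3/8)*I^4 + (1/4)*I^5 + (1/2)*I^6 + (1/8)*I^7 + (1/8)*s2*I + (1/4)*s2*I^2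 + (1/8)*s2*I^3 + (-1/8)*s2*I^5 + (-1/4)*s2*I^6 + (-1/8)*s2*I^7)*Complex.I_sq
lemma case2 : GHZ 3 (2 : Fin (2^3)) = s3*(1+Complex.I)/4 *
    ∑ y : Fin (2^3), (∏ i : Fin 3, ![ !![s2,-s2; 1-s2*Complex.I, 1+s2*Complex.I], !![1, Complex.I-s2; -Complex.I, 1], !![0, s2; 1+Complex.I, -s2] ] i (bit 3 i (2 : Fin (2^3))) (bit 3 i y)) * QFT 3 W3 y := by
  rw [ghz2, hsum]
  simp only [Fin.prod_univ_three, psi_val, bo00, bo01, bo02, bo03, bo04, bo05, bo06, bo07, bo10, bo11, bo12, bo13, bo14, bo15, bo16, bo17, bo20, bo21, bo22, bo23, bo24, bo25, bo26, bo27, vo0, vo1, vo2, vo3, vo4, vo5, vo6, vo7, wdef, Matrix.cons_val', Matrix.cons_val_zero, Matrix.cons_val_one, Matrix.cons_val_two, Matrix.tail_cons, Matrix.head_cons, Matrix.head_fin_const, Matrix.empty_val', Matrix.cons_val_fin_one, Matrix.of_apply]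
  linear_combination ((-1/128)*s3^2 + (-1/192)*s3^2*I + (1/48)*s3^2*I^2 + (3/64)*s3^2*I^3 + (13/192)*s3^2*I^4 + (13/192)*s3^2*I^5 + (1/24)*s3^2*I^6 + (1/64)*s3^2*I^7 + (1/384)*s3^2*I^8 + (1/48)*s2*s3^2*I^2 + (-1/48)*s2*s3^2*I^4 + (-1/48)*s2*s3^2*I^6 + (1/48)*s2*s3^2*I^8 + (-1/256)*s2^2*s3^2 + (-1/384)*s2^2*s3^2*I + (1/96)*s2^2*s3^2*I^2 + (3/128)*s2^2*s3^2*I^3 + (13/384)*s2^2*s3^2*I^4 + (13/384)*s2^2*s3^2*I^5 + (1/48)*s2^2*s3^2*I^6 + (1/128)*s2^2*s3^2*I^7 + (1/768)*s2^2*s3^2*I^8 + (-1/512)*s2^4*s3^2 + (-5/768)*s2^4*s3^2*I + (-1/192)*s2^4*s3^2*I^2 + (5/768)*s2^4*s3^2*I^3 + (13/768)*s2^4*s3^2*I^4 + (13/768)*s2^4*s3^2*I^5 + (1/96)*s2^4*s3^2*I^6 + (1/256)*s2^4*s3^2*I^7 + (1/1536)*s2^4*s3^2*I^8 + (1/3072)*s2^6*s3^2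 + (1/512)*s2^6*s3^2*I + (1/192)*s2^6*s3^2*I^2 + (13/1536)*s2^6*s3^2*I^3 + (5/512)*s2^6*s3^2*I^4 + (13/1536)*s2^6*s3^2*I^5 + (1/192)*s2^6*s3^2*I^6 + (1/512)*s2^6*s3^2*I^7 + (1/3072)*s2^6*s3^2*I^8 + (1/6144)*s2^8*s3^2 + (1/768)*s2^8*s3^2*I + (7/1536)*s2^8*s3^2*I^2 + (7/768)*s2^8*s3^2*I^3 + (35/3072)*s2^8*s3^2*I^4 + (7/768)*s2^8*s3^2*I^5 + (7/1536)*s2^8*s3^2*I^6 + (1/768)*s2^8*s3^2*I^7 + (1/6144)*s2^8*s3^2*I^8)*hs2 + ((-1/64) + (-1/96)*I + (1/24)*I^2 + (3/32)*I^3 + (13/96)*I^4 + (13/96)*I^5 + (1/12)*I^6 + (1/32)*I^7 + (1/192)*I^8 + (1/24)*s2*I^2 + (-1/24)*s2*I^4 + (-1/24)*s2*I^6 + (1/24)*s2*I^8)*hs3 + ((-3/64) + (-1/32)*I + (11/64)*I^2 + (5/16)*I^3 + (15/64)*I^4 + (3/32)*I^5 + (1/64)*I^6 + (1/8)*s2*I^2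 + (-1/4)*s2*I^4 + (1/8)*s2*I^6)*Complex.I_sq
lemma case3 : GHZ 3 (3 : Fin (2^3)) = s3*(1+Complex.I)/4 *
    ∑ y : Fin (2^3), (∏ i : Fin 3, ![ !![s2,-s2; 1-s2*Complex.I, 1+s2*Complex.I], !![1, Complex.I-s2; -Complex.I, 1], !![0, s2; 1+Complex.I, -s2] ] i (bit 3 i (3 : Fin (2^3))) (bit 3 i y)) * QFT 3 W3 y := by
  rw [ghz3, hsum]
  simp only [Fin.prod_univ_three, psi_val, bo00, bo01, bo02, bo03, bo04, bo05, bo06, bo07, bo10, bo11, bo12, bo13, bo14, bo15, bo16, bo17, bo20, bo21, bo22, bo23, bo24, bo25, bo26, bo27, vo0, vo1, vo2, vo3, vo4, vo5, vo6, vo7, wdef, Matrix.cons_val', Matrix.cons_val_zero, Matrix.cons_val_one, Matrix.cons_val_two, Matrix.tail_cons, Matrix.head_cons, Matrix.head_fin_const, Matrix.empty_val', Matrix.cons_val_fin_one, Matrix.of_apply]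
  linear_combination ((1/48)*s3^2*I + (1/48)*s3^2*I^2 + (-1/48)*s3^2*I^3 + (-1/48)*s3^2*I^4 + (-1/48)*s3^2*I^5 + (-1/48)*s3^2*I^6 + (1/48)*s3^2*I^7 + (1/48)*s3^2*I^8 + (-1/48)*s2*s3^2*I^2 + (1/48)*s2*s3^2*I^4 + (1/48)*s2*s3^2*I^6 + (-1/48)*s2*s3^2*I^8 + (-1/96)*s2^2*s3^2*I + (-1/48)*s2^2*s3^2*I^2 + (-1/96)*s2^2*s3^2*I^3 + (1/384)*s2^4*s3^2 + (1/96)*s2^4*s3^2*I + (1/64)*s2^4*s3^2*I^2 + (1/96)*s2^4*s3^2*I^3 + (1/384)*s2^4*s3^2*I^4 + (1/1536)*s2^6*s3^2*I + (1/256)*s2^6*s3^2*I^2 + (5/512)*s2^6*s3^2*I^3 + (5/384)*s2^6*s3^2*I^4 + (5/512)*s2^6*s3^2*I^5 + (1/256)*s2^6*s3^2*I^6 + (1/1536)*s2^6*s3^2*I^7 + (-1/6144)*s2^8*s3^2 + (-1/768)*s2^8*s3^2*I + (-7/1536)*s2^8*s3^2*I^2 + (-7/768)*s2^8*s3^2*I^3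 + (-35/3072)*s2^8*s3^2*I^4 + (-7/768)*s2^8*s3^2*I^5 + (-7/1536)*s2^8*s3^2*I^6 + (-1/768)*s2^8*s3^2*I^7 + (-1/6144)*s2^8*s3^2*I^8)*hs2 + ((1/24)*I + (1/24)*I^2 + (-1/24)*I^3 + (-1/24)*I^4 + (-1/24)*I^5 + (-1/24)*I^6 + (1/24)*I^7 + (1/24)*I^8 + (-1/24)*s2*I^2 + (1/24)*s2*I^4 + (1/24)*s2*I^6 + (-1/24)*s2*I^8)*hs3 + ((1/8)*I + (1/8)*I^2 + (-1/4)*I^3 + (-1/4)*I^4 + (1/8)*I^5 + (1/8)*I^6 + (-1/8)*s2*I^2 + (1/4)*s2*I^4 + (-1/8)*s2*I^6)*Complex.I_sq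
lemma case4 : GHZ 3 (4 : Fin (2^3)) = s3*(1+Complex.I)/4 *
    ∑ y : Fin (2^3), (∏ i : Fin 3, ![ !![s2,-s2; 1-s2*Complex.I, 1+s2*Complex.I], !![1, Complex.I-s2; -Complex.I, 1], !![0, s2; 1+Complex.I, -s2] ] i (bit 3 i (4 : Fin (2^3))) (bit 3 i y)) * QFT 3 W3 y := by
  rw [ghz4, hsum]
  simp only [Fin.prod_univ_three, psi_val, bo00, bo01, bo02, bo03, bo04, bo05, bo06, bo07, bo10, bo11, bo12, bo13, bo14, bo15, bo16, bo17, bo20, bo21, bo22, bo23, bo24, bo25, bo26, bo27, vo0, vo1, vo2, vo3, vo4, vo5, vo6, vo7, wdef, Matrix.cons_val', Matrix.cons_val_zero, Matrix.cons_val_one, Matrix.cons_val_two, Matrix.tail_cons, Matrix.head_cons, Matrix.head_fin_const, Matrix.empty_val', Matrix.cons_val_fin_one, Matrix.of_apply]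
  linear_combination ((7/128)*s3^2 + (9/64)*s3^2*I + (67/384)*s3^2*I^2 + (29/192)*s3^2*I^3 + (1/64)*s3^2*I^4 + (-23/192)*s3^2*I^5 + (-29/192)*s3^2*I^6 + (-25/192)*s3^2*I^7 + (-19/384)*s3^2*I^8 + (-1/384)*s3^2*I^10 + (-7/128)*s2*s3^2 + (-71/768)*s2*s3^2*I + (-31/384)*s2*s3^2*I^2 + (-13/192)*s2*s3^2*I^3 + (-1/128)*s2*s3^2*I^4 + (31/384)*s2*s3^2*I^5 + (9/128)*s2*s3^2*I^6 + (7/192)*s2*s3^2*I^7 + (1/32)*s2*s3^2*I^8 + (-5/256)*s2*s3^2*I^9 + (-1/48)*s2*s3^2*I^10 + (5/768)*s2^2*s3^2 + (5/128)*s2^2*s3^2*I + (59/768)*s2^2*s3^2*I^2 + (29/384)*s2^2*s3^2*I^3 + (7/384)*s2^2*s3^2*I^4 + (-5/128)*s2^2*s3^2*I^5 + (-25/384)*s2^2*s3^2*I^6 + (-25/384)*s2^2*s3^2*I^7 + (-11/768)*s2^2*s3^2*I^8 + (1/96)*s2^2*s3^2*I^9 + (-1/768)*s2^2*s3^2*I^10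 + (-1/768)*s2^3*s3^2 + (-23/1536)*s2^3*s3^2*I + (-35/768)*s2^3*s3^2*I^2 + (-7/128)*s2^3*s3^2*I^3 + (-11/768)*s2^3*s3^2*I^4 + (23/768)*s2^3*s3^2*I^5 + (9/256)*s2^3*s3^2*I^6 + (7/384)*s2^3*s3^2*I^7 + (1/192)*s2^3*s3^2*I^8 + (1/1536)*s2^3*s3^2*I^9 + (5/1536)*s2^4*s3^2 + (11/768)*s2^4*s3^2*I + (43/1536)*s2^4*s3^2*I^2 + (25/768)*s2^4*s3^2*I^3 + (5/256)*s2^4*s3^2*I^4 + (-7/768)*s2^4*s3^2*I^5 + (-25/768)*s2^4*s3^2*I^6 + (-25/768)*s2^4*s3^2*I^7 + (-9/512)*s2^4*s3^2*I^8 + (-1/192)*s2^4*s3^2*I^9 + (-1/1536)*s2^4*s3^2*I^10 + (-1/1536)*s2^5*s3^2 + (-19/3072)*s2^5*s3^2*I + (-9/512)*s2^5*s3^2*I^2 + (-5/256)*s2^5*s3^2*I^3 + (-1/512)*s2^5*s3^2*I^4 + (25/1536)*s2^5*s3^2*I^5 + (9/512)*s2^5*s3^2*I^6 + (7/768)*s2^5*s3^2*I^7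 + (1/384)*s2^5*s3^2*I^8 + (1/3072)*s2^5*s3^2*I^9 + (1/3072)*s2^6*s3^2 + (1/512)*s2^6*s3^2*I + (5/1024)*s2^6*s3^2*I^2 + (3/512)*s2^6*s3^2*I^3 + (1/1536)*s2^6*s3^2*I^4 + (-5/512)*s2^6*s3^2*I^5 + (-9/512)*s2^6*s3^2*I^6 + (-25/1536)*s2^6*s3^2*I^7 + (-9/1024)*s2^6*s3^2*I^8 + (-1/384)*s2^6*s3^2*I^9 + (-1/3072)*s2^6*s3^2*I^10 + (1/6144)*s2^7*s3^2*I + (1/768)*s2^7*s3^2*I^2 + (7/1536)*s2^7*s3^2*I^3 + (7/768)*s2^7*s3^2*I^4 + (35/3072)*s2^7*s3^2*I^5 + (7/768)*s2^7*s3^2*I^6 + (7/1536)*s2^7*s3^2*I^7 + (1/768)*s2^7*s3^2*I^8 + (1/6144)*s2^7*s3^2*I^9 + (1/6144)*s2^8*s3^2 + (1/768)*s2^8*s3^2*I + (9/2048)*s2^8*s3^2*I^2 + (1/128)*s2^8*s3^2*I^3 + (7/1024)*s2^8*s3^2*I^4 + (-7/1024)*s2^8*s3^2*I^6 + (-1/128)*s2^8*s3^2*I^7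 + (-9/2048)*s2^8*s3^2*I^8 + (-1/768)*s2^8*s3^2*I^9 + (-1/6144)*s2^8*s3^2*I^10 + (1/6144)*s2^9*s3^2*I + (1/768)*s2^9*s3^2*I^2 + (7/1536)*s2^9*s3^2*I^3 + (7/768)*s2^9*s3^2*I^4 + (35/3072)*s2^9*s3^2*I^5 + (7/768)*s2^9*s3^2*I^6 + (7/1536)*s2^9*s3^2*I^7 + (1/768)*s2^9*s3^2*I^8 + (1/6144)*s2^9*s3^2*I^9)*hs2 + ((7/64) + (9/32)*I + (67/192)*I^2 + (29/96)*I^3 + (1/32)*I^4 + (-23/96)*I^5 + (-29/96)*I^6 + (-25/96)*I^7 + (-19/192)*I^8 + (-1/192)*I^10 + (-7/64)*s2 + (-71/384)*s2*I + (-31/192)*s2*I^2 + (-13/96)*s2*I^3 + (-1/64)*s2*I^4 + (31/192)*s2*I^5 + (9/64)*s2*I^6 + (7/96)*s2*I^7 + (1/16)*s2*I^8 + (-5/128)*s2*I^9 + (-1/24)*s2*I^10)*hs3 + ((21/64) + (27/32)*I + (23/32)*I^2 + (1/16)*I^3 + (-5/8)*I^4 + (-25/32)*I^5 + (-9/32)*I^6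 + (-1/64)*I^8 + (-21/64)*s2 + (-71/128)*s2*I + (-5/32)*s2*I^2 + (19/128)*s2*I^3 + (7/64)*s2*I^4 + (43/128)*s2*I^5 + (5/16)*s2*I^6 + (-15/128)*s2*I^7 + (-1/8)*s2*I^8)*Complex.I_sq
lemma case5 : GHZ 3 (5 : Fin (2^3)) = s3*(1+Complex.I)/4 *
    ∑ y : Fin (2^3), (∏ i : Fin 3, ![ !![s2,-s2; 1-s2*Complex.I, 1+s2*Complex.I], !![1, Complex.I-s2; -Complex.I, 1], !![0, s2; 1+Complex.I, -s2] ] i (bit 3 i (5 : Fin (2^3))) (bit 3 i y)) * QFT 3 W3 y := by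
  rw [ghz5, hsum]
  simp only [Fin.prod_univ_three, psi_val, bo00, bo01, bo02, bo03, bo04, bo05, bo06, bo07, bo10, bo11, bo12, bo13, bo14, bo15, bo16, bo17, bo20, bo21, bo22, bo23, bo24, bo25, bo26, bo27, vo0, vo1, vo2, vo3, vo4, vo5, vo6, vo7, wdef, Matrix.cons_val', Matrix.cons_val_zero, Matrix.cons_val_one, Matrix.cons_val_two, Matrix.tail_cons, Matrix.head_cons, Matrix.head_fin_const, Matrix.empty_val', Matrix.cons_val_fin_one, Matrix.of_apply]
  linear_combination ((1/24)*s3^2*I + (1/12)*s3^2*I^2 + (1/16)*s3^2*I^3 + (5/48)*s3^2*I^4 + (5/48)*s3^2*I^5 + (1/48)*s3^2*I^6 + (1/48)*s3^2*I^7 + (-1/48)*s3^2*I^8 + (-1/16)*s3^2*I^9 + (-1/48)*s3^2*I^10 + (5/96)*s2*s3^2 + (1/16)*s2*s3^2*I + (-1/96)*s2*s3^2*I^2 + (-1/16)*s2*s3^2*I^3 + (-1/16)*s2*s3^2*I^4 + (-1/24)*s2*s3^2*I^5 + (1/48)*s2*s3^2*I^7 + (1/48)*s2*s3^2*I^8 +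 (1/24)*s2*s3^2*I^9 + (1/48)*s2*s3^2*I^10 + (-1/96)*s2^2*s3^2*I + (-1/48)*s2^2*s3^2*I^2 + (-1/96)*s2^2*s3^2*I^3 + (1/48)*s2^2*s3^2*I^4 + (1/48)*s2^2*s3^2*I^5 + (-1/48)*s2^2*s3^2*I^8 + (-1/48)*s2^2*s3^2*I^9 + (1/384)*s2^3*s3^2*I + (1/96)*s2^3*s3^2*I^2 + (1/64)*s2^3*s3^2*I^3 + (1/96)*s2^3*s3^2*I^4 + (1/384)*s2^3*s3^2*I^5 + (-1/384)*s2^4*s3^2 + (-1/96)*s2^4*s3^2*I + (-7/384)*s2^4*s3^2*I^2 + (-1/48)*s2^4*s3^2*I^3 + (-7/384)*s2^4*s3^2*I^4 + (-1/96)*s2^4*s3^2*I^5 + (-1/384)*s2^4*s3^2*I^6 + (1/1536)*s2^5*s3^2 + (5/768)*s2^5*s3^2*I + (31/1536)*s2^5*s3^2*I^2 + (11/384)*s2^5*s3^2*I^3 + (31/1536)*s2^5*s3^2*I^4 + (5/768)*s2^5*s3^2*I^5 + (1/1536)*s2^5*s3^2*I^6 + (1/1536)*s2^6*s3^2*I +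 (1/256)*s2^6*s3^2*I^2 + (5/512)*s2^6*s3^2*I^3 + (5/384)*s2^6*s3^2*I^4 + (5/512)*s2^6*s3^2*I^5 + (1/256)*s2^6*s3^2*I^6 + (1/1536)*s2^6*s3^2*I^7 + (1/6144)*s2^7*s3^2*I + (1/768)*s2^7*s3^2*I^2 + (7/1536)*s2^7*s3^2*I^3 + (7/768)*s2^7*s3^2*I^4 + (35/3072)*s2^7*s3^2*I^5 + (7/768)*s2^7*s3^2*I^6 + (7/1536)*s2^7*s3^2*I^7 + (1/768)*s2^7*s3^2*I^8 + (1/6144)*s2^7*s3^2*I^9 + (-1/6144)*s2^8*s3^2 + (-1/768)*s2^8*s3^2*I + (-9/2048)*s2^8*s3^2*I^2 + (-1/128)*s2^8*s3^2*I^3 + (-7/1024)*s2^8*s3^2*I^4 + (7/1024)*s2^8*s3^2*I^6 + (1/128)*s2^8*s3^2*I^7 + (9/2048)*s2^8*s3^2*I^8 + (1/768)*s2^8*s3^2*I^9 + (1/6144)*s2^8*s3^2*I^10 + (-1/6144)*s2^9*s3^2*I + (-1/768)*s2^9*s3^2*I^2 + (-7/1536)*s2^9*s3^2*I^3 + (-7/768)*s2^9*s3^2*I^4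 + (-35/3072)*s2^9*s3^2*I^5 + (-7/768)*s2^9*s3^2*I^6 + (-7/1536)*s2^9*s3^2*I^7 + (-1/768)*s2^9*s3^2*I^8 + (-1/6144)*s2^9*s3^2*I^9)*hs2 + ((1/12)*I + (1/6)*I^2 + (1/8)*I^3 + (5/24)*I^4 + (5/24)*I^5 + (1/24)*I^6 + (1/24)*I^7 + (-1/24)*I^8 + (-1/8)*I^9 + (-1/24)*I^10 + (1/48)*s2 + (-1/12)*s2*I + (-3/16)*s2*I^2 + (-3/16)*s2*I^3 + (-3/16)*s2*I^4 + (-7/48)*s2*I^5 + (-1/48)*s2*I^6 + (1/48)*s2*I^7 + (1/16)*s2*I^9 + (1/24)*s2*I^10)*hs3 + ((1/4)*I + (1/2)*I^2 + (1/8)*I^3 + (1/8)*I^4 + (1/2)*I^5 + (-3/8)*I^7 + (-1/8)*I^8 + (1/16)*s2 + (-1/4)*s2*I + (-5/8)*s2*I^2 + (-5/16)*s2*I^3 + (1/16)*s2*I^4 + (-1/8)*s2*I^5 + (-1/8)*s2*I^6 + (3/16)*s2*I^7 + (1/8)*s2*I^8)*Complex.I_sq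
lemma case6 : GHZ 3 (6 : Fin (2^3)) = s3*(1+Complex.I)/4 *
    ∑ y : Fin (2^3), (∏ i : Fin 3, ![ !![s2,-s2; 1-s2*Complex.I, 1+s2*Complex.I], !![1, Complex.I-s2; -Complex.I, 1], !![0, s2; 1+Complex.I, -s2] ] i (bit 3 i (6 : Fin (2^3))) (bit 3 i y)) * QFT 3 W3 y := by
  rw [ghz6, hsum]
  simp only [Fin.prod_univ_three, psi_val, bo00, bo01, bo02, bo03, bo04, bo05, bo06, bo07, bo10, bo11, bo12, bo13, bo14, bo15, bo16, bo17, bo20, bo21, bo22, bo23, bo24, bo25, bo26, bo27, vo0, vo1, vo2, vo3, vo4, vo5, vo6, vo7, wdef, Matrix.cons_val', Matrix.cons_val_zero, Matrix.cons_val_one, Matrix.cons_val_two, Matrix.tail_cons, Matrix.head_cons, Matrix.head_fin_const, Matrix.empty_val', Matrix.cons_val_fin_one, Matrix.of_apply]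
  linear_combination ((1/24)*s3^2 + (1/128)*s3^2*I + (-1/64)*s3^2*I^2 + (-1/48)*s3^2*I^3 + (-13/192)*s3^2*I^4 + (-13/192)*s3^2*I^5 + (-3/64)*s3^2*I^6 + (-1/24)*s3^2*I^7 + (-7/192)*s3^2*I^8 + (-1/384)*s3^2*I^9 + (-5/768)*s2*s3^2 + (-7/384)*s2*s3^2*I + (-1/32)*s2*s3^2*I^2 + (-25/384)*s2*s3^2*I^3 + (-17/384)*s2*s3^2*I^4 + (-5/384)*s2*s3^2*I^5 + (-1/48)*s2*s3^2*I^6 + (5/384)*s2*s3^2*I^7 + (-1/768)*s2*s3^2*I^8 + (-1/48)*s2*s3^2*I^9 + (1/256)*s2^2*s3^2*I + (1/384)*s2^2*s3^2*I^2 + (-1/96)*s2^2*s3^2*I^3 + (-3/128)*s2^2*s3^2*I^4 + (-13/384)*s2^2*s3^2*I^5 + (-13/384)*s2^2*s3^2*I^6 + (-1/48)*s2^2*s3^2*I^7 + (-1/128)*s2^2*s3^2*I^8 + (-1/768)*s2^2*s3^2*I^9 + (-5/1536)*s2^3*s3^2 + (-11/768)*s2^3*s3^2*I + (-5/192)*s2^3*s3^2*I^2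 + (-7/256)*s2^3*s3^2*I^3 + (-17/768)*s2^3*s3^2*I^4 + (-13/768)*s2^3*s3^2*I^5 + (-1/96)*s2^3*s3^2*I^6 + (-1/256)*s2^3*s3^2*I^7 + (-1/1536)*s2^3*s3^2*I^8 + (1/512)*s2^4*s3^2*I + (5/768)*s2^4*s3^2*I^2 + (1/192)*s2^4*s3^2*I^3 + (-5/768)*s2^4*s3^2*I^4 + (-13/768)*s2^4*s3^2*I^5 + (-13/768)*s2^4*s3^2*I^6 + (-1/96)*s2^4*s3^2*I^7 + (-1/256)*s2^4*s3^2*I^8 + (-1/1536)*s2^4*s3^2*I^9 + (-1/3072)*s2^5*s3^2 + (-1/512)*s2^5*s3^2*I + (-1/192)*s2^5*s3^2*I^2 + (-13/1536)*s2^5*s3^2*I^3 + (-5/512)*s2^5*s3^2*I^4 + (-13/1536)*s2^5*s3^2*I^5 + (-1/192)*s2^5*s3^2*I^6 + (-1/512)*s2^5*s3^2*I^7 + (-1/3072)*s2^5*s3^2*I^8 + (-1/3072)*s2^6*s3^2*I + (-1/512)*s2^6*s3^2*I^2 + (-1/192)*s2^6*s3^2*I^3 + (-13/1536)*s2^6*s3^2*I^4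 + (-5/512)*s2^6*s3^2*I^5 + (-13/1536)*s2^6*s3^2*I^6 + (-1/192)*s2^6*s3^2*I^7 + (-1/512)*s2^6*s3^2*I^8 + (-1/3072)*s2^6*s3^2*I^9 + (-1/6144)*s2^7*s3^2 + (-1/768)*s2^7*s3^2*I + (-7/1536)*s2^7*s3^2*I^2 + (-7/768)*s2^7*s3^2*I^3 + (-35/3072)*s2^7*s3^2*I^4 + (-7/768)*s2^7*s3^2*I^5 + (-7/1536)*s2^7*s3^2*I^6 + (-1/768)*s2^7*s3^2*I^7 + (-1/6144)*s2^7*s3^2*I^8 + (-1/6144)*s2^8*s3^2*I + (-1/768)*s2^8*s3^2*I^2 + (-7/1536)*s2^8*s3^2*I^3 + (-7/768)*s2^8*s3^2*I^4 + (-35/3072)*s2^8*s3^2*I^5 + (-7/768)*s2^8*s3^2*I^6 + (-7/1536)*s2^8*s3^2*I^7 + (-1/768)*s2^8*s3^2*I^8 + (-1/6144)*s2^8*s3^2*I^9)*hs2 + ((1/12) + (1/64)*I + (-1/32)*I^2 + (-1/24)*I^3 + (-13/96)*I^4 + (-13/96)*I^5 + (-3/32)*I^6 + (-1/12)*I^7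 + (-7/96)*I^8 + (-1/192)*I^9 + (-5/384)*s2 + (-7/192)*s2*I + (-1/16)*s2*I^2 + (-25/192)*s2*I^3 + (-17/192)*s2*I^4 + (-5/192)*s2*I^5 + (-1/24)*s2*I^6 + (5/192)*s2*I^7 + (-1/384)*s2*I^8 + (-1/24)*s2*I^9)*hs3 + ((1/4) + (3/64)*I + (-11/32)*I^2 + (-11/64)*I^3 + (-1/16)*I^4 + (-15/64)*I^5 + (-7/32)*I^6 + (-1/64)*I^7 + (-5/128)*s2 + (-7/64)*s2*I + (-19/128)*s2*I^2 + (-9/32)*s2*I^3 + (-15/128)*s2*I^4 + (13/64)*s2*I^5 + (-1/128)*s2*I^6 + (-1/8)*s2*I^7)*Complex.I_sq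
lemma case7 : GHZ 3 (7 : Fin (2^3)) = s3*(1+Complex.I)/4 *
    ∑ y : Fin (2^3), (∏ i : Fin 3, ![ !![s2,-s2; 1-s2*Complex.I, 1+s2*Complex.I], !![1, Complex.I-s2; -Complex.I, 1], !![0, s2; 1+Complex.I, -s2] ] i (bit 3 i (7 : Fin (2^3))) (bit 3 i y)) * QFT 3 W3 y := by
  rw [ghz7, hsum]
  simp only [Fin.prod_univ_three, psi_val, bo00, bo01, bo02, bo03, bo04, bo05, bo06, bo07, bo10, bo11, bo12, bo13, bo14, bo15, bo16, bo17, bo20, bo21, bo22, bo23, bo24, bo25, bo26, bo27, vo0, vo1, vo2, vo3, vo4, vo5, vo6, vo7, wdef, Matrix.cons_val', Matrix.cons_val_zero, Matrix.cons_val_one, Matrix.cons_val_two, Matrix.tail_cons, Matrix.head_cons, Matrix.head_fin_const, Matrix.empty_val', Matrix.cons_val_fin_one, Matrix.of_apply]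
  linear_combination ((-1/24)*s3^2 + (-1/48)*s3^2*I^3 + (1/24)*s3^2*I^4 + (1/48)*s3^2*I^5 + (1/48)*s3^2*I^7 + (-1/48)*s3^2*I^9 + (-1/96)*s2*s3^2*I + (-1/48)*s2*s3^2*I^2 + (1/96)*s2*s3^2*I^3 + (-1/48)*s2*s3^2*I^5 + (-1/48)*s2*s3^2*I^7 + (1/48)*s2*s3^2*I^9 + (1/96)*s2^2*s3^2*I^2 + (1/48)*s2^2*s3^2*I^3 + (1/96)*s2^2*s3^2*I^4 + (1/384)*s2^3*s3^2 + (1/96)*s2^3*s3^2*I + (1/64)*s2^3*s3^2*I^2 + (1/96)*s2^3*s3^2*I^3 + (1/384)*s2^3*s3^2*I^4 + (-1/384)*s2^4*s3^2*I + (-1/96)*s2^4*s3^2*I^2 + (-1/64)*s2^4*s3^2*I^3 + (-1/96)*s2^4*s3^2*I^4 + (-1/384)*s2^4*s3^2*I^5 + (-1/1536)*s2^5*s3^2*I + (-1/256)*s2^5*s3^2*I^2 + (-5/512)*s2^5*s3^2*I^3 + (-5/384)*s2^5*s3^2*I^4 + (-5/512)*s2^5*s3^2*I^5 + (-1/256)*s2^5*s3^2*I^6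 + (-1/1536)*s2^5*s3^2*I^7 + (-1/1536)*s2^6*s3^2*I^2 + (-1/256)*s2^6*s3^2*I^3 + (-5/512)*s2^6*s3^2*I^4 + (-5/384)*s2^6*s3^2*I^5 + (-5/512)*s2^6*s3^2*I^6 + (-1/256)*s2^6*s3^2*I^7 + (-1/1536)*s2^6*s3^2*I^8 + (1/6144)*s2^7*s3^2 + (1/768)*s2^7*s3^2*I + (7/1536)*s2^7*s3^2*I^2 + (7/768)*s2^7*s3^2*I^3 + (35/3072)*s2^7*s3^2*I^4 + (7/768)*s2^7*s3^2*I^5 + (7/1536)*s2^7*s3^2*I^6 + (1/768)*s2^7*s3^2*I^7 + (1/6144)*s2^7*s3^2*I^8 + (1/6144)*s2^8*s3^2*I + (1/768)*s2^8*s3^2*I^2 + (7/1536)*s2^8*s3^2*I^3 + (7/768)*s2^8*s3^2*I^4 + (35/3072)*s2^8*s3^2*I^5 + (7/768)*s2^8*s3^2*I^6 + (7/1536)*s2^8*s3^2*I^7 + (1/768)*s2^8*s3^2*I^8 + (1/6144)*s2^8*s3^2*I^9)*hs2 + ((-1/12) + (-1/24)*I^3 + (1/12)*I^4 + (1/24)*I^5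 + (1/24)*I^7 + (-1/24)*I^9 + (-1/24)*s2 + (-1/48)*s2*I + (1/16)*s2*I^2 + (1/16)*s2*I^3 + (-1/48)*s2*I^4 + (-1/48)*s2*I^5 + (1/48)*s2*I^6 + (-1/16)*s2*I^7 + (-1/48)*s2*I^8 + (1/24)*s2*I^9)*hs3 + ((-1/4) + (1/4)*I^2 + (-1/8)*I^3 + (1/4)*I^5 + (-1/8)*I^7 + (3/8)*s2 + (-1/16)*s2*I + (-3/16)*s2*I^2 + (1/4)*s2*I^3 + (1/8)*s2*I^4 + (-5/16)*s2*I^5 + (-1/16)*s2*I^6 + (1/8)*s2*I^7)*Complex.I_sq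

theorem part1 : SLOCCEquiv 3 (QFT 3 W3) (GHZ 3) := by
  refine ⟨![ !![s2,-s2; 1-s2*Complex.I, 1+s2*Complex.I], !![1, Complex.I-s2; -Complex.I, 1], !![0, s2; 1+Complex.I, -s2] ], s3*(1+Complex.I)/4, ?_, ?_, ?_⟩
  · refine div_ne_zero (mul_ne_zero hs3ne ?_) (by norm_num)
    intro h
    have := congrArg Complex.im h
    simp at this
  · intro i
    fin_cases i
    exacts [unitA, unitB, unitC]
  · intro x
    fin_cases x
    exacts [case0, case1, case2, case3, case4, case5, case6, case7]

lemma inv3 : ((Real.sqrt 3:ℝ):ℂ)⁻¹ = s3/3 := by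
  rw [show ((Real.sqrt 3:ℝ):ℂ) = s3 from rfl, eq_div_iff (by norm_num : (3:ℂ) ≠ 0),
    inv_mul_eq_div, div_eq_iff hs3ne]
  linear_combination -hs3
lemma w3v0 : W3 (0 : Fin (2^3)) = 0 := by
  rw [W3]; norm_num [vo0, inv3]
lemma w3v1 : W3 (1 : Fin (2^3)) = s3/3 := by
  rw [W3]; norm_num [vo1, inv3]
lemma w3v2 : W3 (2 : Fin (2^3)) = s3/3 := by
  rw [W3]; norm_num [vo2, inv3]
lemma w3v3 : W3 (3 : Fin (2^3)) = 0 := by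
  rw [W3]; norm_num [vo3, inv3]
lemma w3v4 : W3 (4 : Fin (2^3)) = s3/3 := by
  rw [W3]; norm_num [vo4, inv3]
lemma w3v5 : W3 (5 : Fin (2^3)) = 0 := by
  rw [W3]; norm_num [vo5, inv3]
lemma w3v6 : W3 (6 : Fin (2^3)) = 0 := by
  rw [W3]; norm_num [vo6, inv3]
lemma w3v7 : W3 (7 : Fin (2^3)) = 0 := by
  rw [W3]; norm_num [vo7, inv3]

set_option maxHeartbeats 2000000 in
theorem part2 : ¬ SLOCCEquiv 3 (QFT 3 W3) W3 := by
  rintro ⟨g, c, hc, -, hg⟩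
  have h0 := hg (0 : Fin (2^3))
  have h1 := hg (1 : Fin (2^3))
  have h2 := hg (2 : Fin (2^3))
  have h3 := hg (3 : Fin (2^3))
  have h4 := hg (4 : Fin (2^3))
  have h5 := hg (5 : Fin (2^3))
  have h6 := hg (6 : Fin (2^3))
  have h7 := hg (7 : Fin (2^3))
  rw [w3v0, hsum] at h0
  rw [w3v1, hsum] at h1
  rw [w3v2, hsum] at h2
  rw [w3v3, hsum] at h3
  rw [w3v4, hsum] at h4
  rw [w3v5, hsum] at h5
  rw [w3v6, hsum] at h6
  rw [w3v7, hsum] at h7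
  simp only [Fin.prod_univ_three, psi_val, bo00, bo01, bo02, bo03, bo04, bo05, bo06, bo07, bo10, bo11, bo12, bo13, bo14, bo15, bo16, bo17, bo20, bo21, bo22, bo23, bo24, bo25, bo26, bo27, vo0, vo1, vo2, vo3, vo4, vo5, vo6, vo7, wdef] at h0 h1 h2 h3 h4 h5 h6 h7
  obtain ⟨A0, hA0⟩ : ∃ z : ℂ, z = c * (s2*s3/12) * (g 0 0 0 * (1+s2*Complex.I) + g 0 0 1 * (-1+s2*Complex.I)) := ⟨_, rfl⟩
  obtain ⟨A1, hA1⟩ : ∃ z : ℂ, z = c * (s2*s3/12) * (g 0 1 0 * (1+s2*Complex.I) + g 0 1 1 * (-1+s2*Complex.I)) := ⟨_, rfl⟩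
  obtain ⟨B0, hB0⟩ : ∃ z : ℂ, z = g 1 0 0 + g 1 0 1 * Complex.I := ⟨_, rfl⟩
  obtain ⟨B1, hB1⟩ : ∃ z : ℂ, z = g 1 1 0 + g 1 1 1 * Complex.I := ⟨_, rfl⟩
  obtain ⟨C0, hC0⟩ : ∃ z : ℂ, z = g 2 0 0 + g 2 0 1 * ((1+Complex.I)*s2/2) := ⟨_, rfl⟩
  obtain ⟨C1, hC1⟩ : ∃ z : ℂ, z = g 2 1 0 + g 2 1 1 * ((1+Complex.I)*s2/2) := ⟨_, rfl⟩
  obtain ⟨D0, hD0⟩ : ∃ z : ℂ, z = c * (s2*s3/12) * s2 * (g 0 0 0 + g 0 0 1) := ⟨_, rfl⟩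
  obtain ⟨D1, hD1⟩ : ∃ z : ℂ, z = c * (s2*s3/12) * s2 * (g 0 1 0 + g 0 1 1) := ⟨_, rfl⟩
  obtain ⟨E0, hE0⟩ : ∃ z : ℂ, z = g 1 0 0 * (s2-Complex.I) + g 1 0 1 := ⟨_, rfl⟩
  obtain ⟨E1, hE1⟩ : ∃ z : ℂ, z = g 1 1 0 * (s2-Complex.I) + g 1 1 1 := ⟨_, rfl⟩
  obtain ⟨F0, hF0⟩ : ∃ z : ℂ, z = g 2 0 0 := ⟨_, rfl⟩
  obtain ⟨F1, hF1⟩ : ∃ z : ℂ, z = g 2 1 0 := ⟨_, rfl⟩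

  obtain ⟨m, hm⟩ : ∃ z : ℂ, z = B0*C0*E1*F1 + B1*C1*E0*F0 - B0*C1*E1*F0 - B1*C0*E0*F1 := ⟨_, rfl⟩
  have t0 : A0*B0*C0 + D0*E0*F0 = 0 := by
    rw [hA0, hB0, hC0, hD0, hE0, hF0]
    linear_combination -h0 + ((-1/192)*s3*c*(g 0 0 1)*(g 1 0 1)*(g 2 0 1) + (1/12)*s3*c*(g 0 0 1)*(g 1 0 1)*(g 2 0 0) + (-5/96)*s3*c*(g 0 0 1)*(g 1 0 0)*(g 2 0 1) + (-1/48)*s3*c*(g 0 0 0)*(g 1 0 1)*(g 2 0 1) + (1/12)*s3*c*(g 0 0 0)*(g 1 0 1)*(g 2 0 0) + (-5/64)*s3*I*c*(g 0 0 1)*(g 1 0 1)*(g 2 0 1) + (-3/32)*s3*I*c*(g 0 0 1)*(g 1 0 0)*(g 2 0 1) + (-1/48)*s3*I*c*(g 0 0 0)*(g 1 0 1)*(g 2 0 1) + (-29/192)*s3*I^2*c*(g 0 0 1)*(g 1 0 1)*(g 2 0 1) + (1/12)*s3*I^2*c*(g 0 0 1)*(g 1 0 1)*(g 2 0 0) +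 (-5/48)*s3*I^2*c*(g 0 0 1)*(g 1 0 0)*(g 2 0 1) + (-1/48)*s3*I^2*c*(g 0 0 0)*(g 1 0 1)*(g 2 0 1) + (1/12)*s3*I^2*c*(g 0 0 0)*(g 1 0 1)*(g 2 0 0) + (-35/192)*s3*I^3*c*(g 0 0 1)*(g 1 0 1)*(g 2 0 1) + (-5/48)*s3*I^3*c*(g 0 0 1)*(g 1 0 0)*(g 2 0 1) + (-1/48)*s3*I^3*c*(g 0 0 0)*(g 1 0 1)*(g 2 0 1) + (-35/192)*s3*I^4*c*(g 0 0 1)*(g 1 0 1)*(g 2 0 1) + (-5/96)*s3*I^4*c*(g 0 0 1)*(g 1 0 0)*(g 2 0 1) + (-7/64)*s3*I^5*c*(g 0 0 1)*(g 1 0 1)*(g 2 0 1) + (-1/96)*s3*I^5*c*(g 0 0 1)*(g 1 0 0)*(g 2 0 1) + (-7/192)*s3*I^6*c*(g 0 0 1)*(g 1 0 1)*(g 2 0 1) + (-1/192)*s3*I^7*c*(g 0 0 1)*(g 1 0 1)*(g 2 0 1) + (-1/192)*s2*s3*c*(g 0 0 1)*(g 1 0 1)*(g 2 0 0) + (7/96)*s2*s3*c*(g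 0 0 1)*(g 1 0 0)*(g 2 0 0) + (-1/48)*s2*s3*c*(g 0 0 0)*(g 1 0 1)*(g 2 0 0) + (1/12)*s2*s3*c*(g 0 0 0)*(g 1 0 0)*(g 2 0 0) + (-1/32)*s2*s3*I*c*(g 0 0 1)*(g 1 0 1)*(g 2 0 0) + (1/24)*s2*s3*I*c*(g 0 0 1)*(g 1 0 0)*(g 2 0 1) + (-1/24)*s2*s3*I*c*(g 0 0 1)*(g 1 0 0)*(g 2 0 0) + (-1/24)*s2*s3*I*c*(g 0 0 0)*(g 1 0 1)*(g 2 0 0) + (1/24)*s2*s3*I*c*(g 0 0 0)*(g 1 0 0)*(g 2 0 1) + (1/24)*s2*s3*I^2*c*(g 0 0 1)*(g 1 0 1)*(g 2 0 1) + (-5/64)*s2*s3*I^2*c*(g 0 0 1)*(g 1 0 1)*(g 2 0 0) + (1/24)*s2*s3*I^2*c*(g 0 0 1)*(g 1 0 0)*(g 2 0 1) + (-1/16)*s2*s3*I^2*c*(g 0 0 1)*(g 1 0 0)*(g 2 0 0) + (1/24)*s2*s3*I^2*c*(g 0 0 0)*(g 1 0 1)*(g 2 0 1) + (-1/48)*s2*s3*I^2*c*(g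 0 0 0)*(g 1 0 1)*(g 2 0 0) + (1/24)*s2*s3*I^2*c*(g 0 0 0)*(g 1 0 0)*(g 2 0 1) + (1/24)*s2*s3*I^3*c*(g 0 0 1)*(g 1 0 1)*(g 2 0 1) + (-5/48)*s2*s3*I^3*c*(g 0 0 1)*(g 1 0 1)*(g 2 0 0) + (-1/24)*s2*s3*I^3*c*(g 0 0 1)*(g 1 0 0)*(g 2 0 0) + (1/24)*s2*s3*I^3*c*(g 0 0 0)*(g 1 0 1)*(g 2 0 1) + (-5/64)*s2*s3*I^4*c*(g 0 0 1)*(g 1 0 1)*(g 2 0 0) + (-1/96)*s2*s3*I^4*c*(g 0 0 1)*(g 1 0 0)*(g 2 0 0) + (-1/32)*s2*s3*I^5*c*(g 0 0 1)*(g 1 0 1)*(g 2 0 0) + (-1/192)*s2*s3*I^6*c*(g 0 0 1)*(g 1 0 1)*(g 2 0 0) + (-1/384)*s2^2*s3*c*(g 0 0 1)*(g 1 0 1)*(g 2 0 1) + (-1/192)*s2^2*s3*c*(g 0 0 1)*(g 1 0 0)*(g 2 0 1) + (-1/96)*s2^2*s3*c*(g 0 0 0)*(g 1 0 1)*(g 2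 0 1) + (-7/384)*s2^2*s3*I*c*(g 0 0 1)*(g 1 0 1)*(g 2 0 1) + (-5/192)*s2^2*s3*I*c*(g 0 0 1)*(g 1 0 0)*(g 2 0 1) + (-1/32)*s2^2*s3*I*c*(g 0 0 0)*(g 1 0 1)*(g 2 0 1) + (-7/128)*s2^2*s3*I^2*c*(g 0 0 1)*(g 1 0 1)*(g 2 0 1) + (-5/96)*s2^2*s3*I^2*c*(g 0 0 1)*(g 1 0 0)*(g 2 0 1) + (-1/32)*s2^2*s3*I^2*c*(g 0 0 0)*(g 1 0 1)*(g 2 0 1) + (-35/384)*s2^2*s3*I^3*c*(g 0 0 1)*(g 1 0 1)*(g 2 0 1) + (-5/96)*s2^2*s3*I^3*c*(g 0 0 1)*(g 1 0 0)*(g 2 0 1) + (-1/96)*s2^2*s3*I^3*c*(g 0 0 0)*(g 1 0 1)*(g 2 0 1) + (-35/384)*s2^2*s3*I^4*c*(g 0 0 1)*(g 1 0 1)*(g 2 0 1) + (-5/192)*s2^2*s3*I^4*c*(g 0 0 1)*(g 1 0 0)*(g 2 0 1) + (-7/128)*s2^2*s3*I^5*c*(g 0 0 1)*(g 1 0 1)*(g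 2 0 1) + (-1/192)*s2^2*s3*I^5*c*(g 0 0 1)*(g 1 0 0)*(g 2 0 1) + (-7/384)*s2^2*s3*I^6*c*(g 0 0 1)*(g 1 0 1)*(g 2 0 1) + (-1/384)*s2^2*s3*I^7*c*(g 0 0 1)*(g 1 0 1)*(g 2 0 1) + (-1/384)*s2^3*s3*c*(g 0 0 1)*(g 1 0 1)*(g 2 0 0) + (-1/192)*s2^3*s3*c*(g 0 0 1)*(g 1 0 0)*(g 2 0 0) + (-1/64)*s2^3*s3*I*c*(g 0 0 1)*(g 1 0 1)*(g 2 0 0) + (-1/48)*s2^3*s3*I*c*(g 0 0 1)*(g 1 0 0)*(g 2 0 0) + (-5/128)*s2^3*s3*I^2*c*(g 0 0 1)*(g 1 0 1)*(g 2 0 0) + (-1/32)*s2^3*s3*I^2*c*(g 0 0 1)*(g 1 0 0)*(g 2 0 0) + (-5/96)*s2^3*s3*I^3*c*(g 0 0 1)*(g 1 0 1)*(g 2 0 0) + (-1/48)*s2^3*s3*I^3*c*(g 0 0 1)*(g 1 0 0)*(g 2 0 0) + (-5/128)*s2^3*s3*I^4*c*(g 0 0 1)*(g 1 0 1)*(g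 2 0 0) + (-1/192)*s2^3*s3*I^4*c*(g 0 0 1)*(g 1 0 0)*(g 2 0 0) + (-1/64)*s2^3*s3*I^5*c*(g 0 0 1)*(g 1 0 1)*(g 2 0 0) + (-1/384)*s2^3*s3*I^6*c*(g 0 0 1)*(g 1 0 1)*(g 2 0 0) + (-1/768)*s2^4*s3*c*(g 0 0 1)*(g 1 0 1)*(g 2 0 1) + (-1/384)*s2^4*s3*c*(g 0 0 1)*(g 1 0 0)*(g 2 0 1) + (-7/768)*s2^4*s3*I*c*(g 0 0 1)*(g 1 0 1)*(g 2 0 1) + (-5/384)*s2^4*s3*I*c*(g 0 0 1)*(g 1 0 0)*(g 2 0 1) + (-7/256)*s2^4*s3*I^2*c*(g 0 0 1)*(g 1 0 1)*(g 2 0 1) + (-5/192)*s2^4*s3*I^2*c*(g 0 0 1)*(g 1 0 0)*(g 2 0 1) + (-35/768)*s2^4*s3*I^3*c*(g 0 0 1)*(g 1 0 1)*(g 2 0 1) + (-5/192)*s2^4*s3*I^3*c*(g 0 0 1)*(g 1 0 0)*(g 2 0 1) + (-35/768)*s2^4*s3*I^4*c*(g 0 0 1)*(g 1 0 1)*(g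 2 0 1) + (-5/384)*s2^4*s3*I^4*c*(g 0 0 1)*(g 1 0 0)*(g 2 0 1) + (-7/256)*s2^4*s3*I^5*c*(g 0 0 1)*(g 1 0 1)*(g 2 0 1) + (-1/384)*s2^4*s3*I^5*c*(g 0 0 1)*(g 1 0 0)*(g 2 0 1) + (-7/768)*s2^4*s3*I^6*c*(g 0 0 1)*(g 1 0 1)*(g 2 0 1) + (-1/768)*s2^4*s3*I^7*c*(g 0 0 1)*(g 1 0 1)*(g 2 0 1) + (-1/768)*s2^5*s3*c*(g 0 0 1)*(g 1 0 1)*(g 2 0 0) + (-1/128)*s2^5*s3*I*c*(g 0 0 1)*(g 1 0 1)*(g 2 0 0) + (-5/256)*s2^5*s3*I^2*c*(g 0 0 1)*(g 1 0 1)*(g 2 0 0) + (-5/192)*s2^5*s3*I^3*c*(g 0 0 1)*(g 1 0 1)*(g 2 0 0) + (-5/256)*s2^5*s3*I^4*c*(g 0 0 1)*(g 1 0 1)*(g 2 0 0) + (-1/128)*s2^5*s3*I^5*c*(g 0 0 1)*(g 1 0 1)*(g 2 0 0) + (-1/768)*s2^5*s3*I^6*c*(g 0 0 1)*(g 1 0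 1)*(g 2 0 0) + (-1/1536)*s2^6*s3*c*(g 0 0 1)*(g 1 0 1)*(g 2 0 1) + (-7/1536)*s2^6*s3*I*c*(g 0 0 1)*(g 1 0 1)*(g 2 0 1) + (-7/512)*s2^6*s3*I^2*c*(g 0 0 1)*(g 1 0 1)*(g 2 0 1) + (-35/1536)*s2^6*s3*I^3*c*(g 0 0 1)*(g 1 0 1)*(g 2 0 1) + (-35/1536)*s2^6*s3*I^4*c*(g 0 0 1)*(g 1 0 1)*(g 2 0 1) + (-7/512)*s2^6*s3*I^5*c*(g 0 0 1)*(g 1 0 1)*(g 2 0 1) + (-7/1536)*s2^6*s3*I^6*c*(g 0 0 1)*(g 1 0 1)*(g 2 0 1) + (-1/1536)*s2^6*s3*I^7*c*(g 0 0 1)*(g 1 0 1)*(g 2 0 1))*hs2 + (0)*hs3 + ((-1/96)*s3*c*(g 0 0 1)*(g 1 0 1)*(g 2 0 1) + (1/6)*s3*c*(g 0 0 1)*(g 1 0 1)*(g 2 0 0) + (-5/48)*s3*c*(g 0 0 1)*(g 1 0 0)*(g 2 0 1) + (-1/24)*s3*c*(g 0 0 0)*(g 1 0 1)*(g 2 0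 1) + (1/6)*s3*c*(g 0 0 0)*(g 1 0 1)*(g 2 0 0) + (-5/32)*s3*I*c*(g 0 0 1)*(g 1 0 1)*(g 2 0 1) + (-3/16)*s3*I*c*(g 0 0 1)*(g 1 0 0)*(g 2 0 1) + (-1/24)*s3*I*c*(g 0 0 0)*(g 1 0 1)*(g 2 0 1) + (-7/24)*s3*I^2*c*(g 0 0 1)*(g 1 0 1)*(g 2 0 1) + (-5/48)*s3*I^2*c*(g 0 0 1)*(g 1 0 0)*(g 2 0 1) + (-5/24)*s3*I^3*c*(g 0 0 1)*(g 1 0 1)*(g 2 0 1) + (-1/48)*s3*I^3*c*(g 0 0 1)*(g 1 0 0)*(g 2 0 1) + (-7/96)*s3*I^4*c*(g 0 0 1)*(g 1 0 1)*(g 2 0 1) + (-1/96)*s3*I^5*c*(g 0 0 1)*(g 1 0 1)*(g 2 0 1) + (1/12)*s2*s3*c*(g 0 0 1)*(g 1 0 1)*(g 2 0 1) + (-3/32)*s2*s3*c*(g 0 0 1)*(g 1 0 1)*(g 2 0 0) + (1/12)*s2*s3*c*(g 0 0 1)*(g 1 0 0)*(g 2 0 1) + (-1/48)*s2*s3*c*(g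 0 0 1)*(g 1 0 0)*(g 2 0 0) + (1/12)*s2*s3*c*(g 0 0 0)*(g 1 0 1)*(g 2 0 1) + (-1/8)*s2*s3*c*(g 0 0 0)*(g 1 0 1)*(g 2 0 0) + (1/12)*s2*s3*c*(g 0 0 0)*(g 1 0 0)*(g 2 0 1) + (-7/48)*s2*s3*I*c*(g 0 0 1)*(g 1 0 1)*(g 2 0 0) + (1/12)*s2*s3*I*c*(g 0 0 1)*(g 1 0 0)*(g 2 0 1) + (-1/12)*s2*s3*I*c*(g 0 0 1)*(g 1 0 0)*(g 2 0 0) + (-1/16)*s2*s3*I^2*c*(g 0 0 1)*(g 1 0 1)*(g 2 0 0) + (-5/48)*s2*s3*I^2*c*(g 0 0 1)*(g 1 0 0)*(g 2 0 0) + (1/12)*s2*s3*I^3*c*(g 0 0 1)*(g 1 0 1)*(g 2 0 1) + (-1/16)*s2*s3*I^3*c*(g 0 0 1)*(g 1 0 1)*(g 2 0 0) + (-1/12)*s2*s3*I^3*c*(g 0 0 1)*(g 1 0 0)*(g 2 0 1) + (-3/32)*s2*s3*I^4*c*(g 0 0 1)*(g 1 0 1)*(g 2 0 0) + (-1/12)*s2*s3*I^5*c*(g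 0 0 1)*(g 1 0 1)*(g 2 0 1))*Complex.I_sq
  have t1 : A0*B0*C1 + D0*E0*F1 = s3/3 := by
    rw [hA0, hB0, hC1, hD0, hE0, hF1]
    linear_combination -h1 + ((-1/192)*s3*c*(g 0 0 1)*(g 1 0 1)*(g 2 1 1) + (1/12)*s3*c*(g 0 0 1)*(g 1 0 1)*(g 2 1 0) + (-5/96)*s3*c*(g 0 0 1)*(g 1 0 0)*(g 2 1 1) + (-1/48)*s3*c*(g 0 0 0)*(g 1 0 1)*(g 2 1 1) + (1/12)*s3*c*(g 0 0 0)*(g 1 0 1)*(g 2 1 0) + (-5/64)*s3*I*c*(g 0 0 1)*(g 1 0 1)*(g 2 1 1) + (-3/32)*s3*I*c*(g 0 0 1)*(g 1 0 0)*(g 2 1 1) + (-1/48)*s3*I*c*(g 0 0 0)*(g 1 0 1)*(g 2 1 1) + (-29/192)*s3*I^2*c*(g 0 0 1)*(g 1 0 1)*(g 2 1 1) + (1/12)*s3*I^2*c*(g 0 0 1)*(g 1 0 1)*(g 2 1 0) + (-5/48)*s3*I^2*c*(g 0 0 1)*(g 1 0 0)*(g 2 1 1) + (-1/48)*s3*I^2*c*(g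 0 0 0)*(g 1 0 1)*(g 2 1 1) + (1/12)*s3*I^2*c*(g 0 0 0)*(g 1 0 1)*(g 2 1 0) + (-35/192)*s3*I^3*c*(g 0 0 1)*(g 1 0 1)*(g 2 1 1) + (-5/48)*s3*I^3*c*(g 0 0 1)*(g 1 0 0)*(g 2 1 1) + (-1/48)*s3*I^3*c*(g 0 0 0)*(g 1 0 1)*(g 2 1 1) + (-35/192)*s3*I^4*c*(g 0 0 1)*(g 1 0 1)*(g 2 1 1) + (-5/96)*s3*I^4*c*(g 0 0 1)*(g 1 0 0)*(g 2 1 1) + (-7/64)*s3*I^5*c*(g 0 0 1)*(g 1 0 1)*(g 2 1 1) + (-1/96)*s3*I^5*c*(g 0 0 1)*(g 1 0 0)*(g 2 1 1) + (-7/192)*s3*I^6*c*(g 0 0 1)*(g 1 0 1)*(g 2 1 1) + (-1/192)*s3*I^7*c*(g 0 0 1)*(g 1 0 1)*(g 2 1 1) + (-1/192)*s2*s3*c*(g 0 0 1)*(g 1 0 1)*(g 2 1 0) + (7/96)*s2*s3*c*(g 0 0 1)*(g 1 0 0)*(g 2 1 0) + (-1/48)*s2*s3*c*(g 0 0 0)*(g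 1 0 1)*(g 2 1 0) + (1/12)*s2*s3*c*(g 0 0 0)*(g 1 0 0)*(g 2 1 0) + (-1/32)*s2*s3*I*c*(g 0 0 1)*(g 1 0 1)*(g 2 1 0) + (1/24)*s2*s3*I*c*(g 0 0 1)*(g 1 0 0)*(g 2 1 1) + (-1/24)*s2*s3*I*c*(g 0 0 1)*(g 1 0 0)*(g 2 1 0) + (-1/24)*s2*s3*I*c*(g 0 0 0)*(g 1 0 1)*(g 2 1 0) + (1/24)*s2*s3*I*c*(g 0 0 0)*(g 1 0 0)*(g 2 1 1) + (1/24)*s2*s3*I^2*c*(g 0 0 1)*(g 1 0 1)*(g 2 1 1) + (-5/64)*s2*s3*I^2*c*(g 0 0 1)*(g 1 0 1)*(g 2 1 0) + (1/24)*s2*s3*I^2*c*(g 0 0 1)*(g 1 0 0)*(g 2 1 1) + (-1/16)*s2*s3*I^2*c*(g 0 0 1)*(g 1 0 0)*(g 2 1 0) + (1/24)*s2*s3*I^2*c*(g 0 0 0)*(g 1 0 1)*(g 2 1 1) + (-1/48)*s2*s3*I^2*c*(g 0 0 0)*(g 1 0 1)*(g 2 1 0) + (1/24)*s2*s3*I^2*c*(g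 0 0 0)*(g 1 0 0)*(g 2 1 1) + (1/24)*s2*s3*I^3*c*(g 0 0 1)*(g 1 0 1)*(g 2 1 1) + (-5/48)*s2*s3*I^3*c*(g 0 0 1)*(g 1 0 1)*(g 2 1 0) + (-1/24)*s2*s3*I^3*c*(g 0 0 1)*(g 1 0 0)*(g 2 1 0) + (1/24)*s2*s3*I^3*c*(g 0 0 0)*(g 1 0 1)*(g 2 1 1) + (-5/64)*s2*s3*I^4*c*(g 0 0 1)*(g 1 0 1)*(g 2 1 0) + (-1/96)*s2*s3*I^4*c*(g 0 0 1)*(g 1 0 0)*(g 2 1 0) + (-1/32)*s2*s3*I^5*c*(g 0 0 1)*(g 1 0 1)*(g 2 1 0) + (-1/192)*s2*s3*I^6*c*(g 0 0 1)*(g 1 0 1)*(g 2 1 0) + (-1/384)*s2^2*s3*c*(g 0 0 1)*(g 1 0 1)*(g 2 1 1) + (-1/192)*s2^2*s3*c*(g 0 0 1)*(g 1 0 0)*(g 2 1 1) + (-1/96)*s2^2*s3*c*(g 0 0 0)*(g 1 0 1)*(g 2 1 1) + (-7/384)*s2^2*s3*I*c*(g 0 0 1)*(g 1 0 1)*(g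 2 1 1) + (-5/192)*s2^2*s3*I*c*(g 0 0 1)*(g 1 0 0)*(g 2 1 1) + (-1/32)*s2^2*s3*I*c*(g 0 0 0)*(g 1 0 1)*(g 2 1 1) + (-7/128)*s2^2*s3*I^2*c*(g 0 0 1)*(g 1 0 1)*(g 2 1 1) + (-5/96)*s2^2*s3*I^2*c*(g 0 0 1)*(g 1 0 0)*(g 2 1 1) + (-1/32)*s2^2*s3*I^2*c*(g 0 0 0)*(g 1 0 1)*(g 2 1 1) + (-35/384)*s2^2*s3*I^3*c*(g 0 0 1)*(g 1 0 1)*(g 2 1 1) + (-5/96)*s2^2*s3*I^3*c*(g 0 0 1)*(g 1 0 0)*(g 2 1 1) + (-1/96)*s2^2*s3*I^3*c*(g 0 0 0)*(g 1 0 1)*(g 2 1 1) + (-35/384)*s2^2*s3*I^4*c*(g 0 0 1)*(g 1 0 1)*(g 2 1 1) + (-5/192)*s2^2*s3*I^4*c*(g 0 0 1)*(g 1 0 0)*(g 2 1 1) + (-7/128)*s2^2*s3*I^5*c*(g 0 0 1)*(g 1 0 1)*(g 2 1 1) + (-1/192)*s2^2*s3*I^5*c*(g 0 0 1)*(g 1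 0 0)*(g 2 1 1) + (-7/384)*s2^2*s3*I^6*c*(g 0 0 1)*(g 1 0 1)*(g 2 1 1) + (-1/384)*s2^2*s3*I^7*c*(g 0 0 1)*(g 1 0 1)*(g 2 1 1) + (-1/384)*s2^3*s3*c*(g 0 0 1)*(g 1 0 1)*(g 2 1 0) + (-1/192)*s2^3*s3*c*(g 0 0 1)*(g 1 0 0)*(g 2 1 0) + (-1/64)*s2^3*s3*I*c*(g 0 0 1)*(g 1 0 1)*(g 2 1 0) + (-1/48)*s2^3*s3*I*c*(g 0 0 1)*(g 1 0 0)*(g 2 1 0) + (-5/128)*s2^3*s3*I^2*c*(g 0 0 1)*(g 1 0 1)*(g 2 1 0) + (-1/32)*s2^3*s3*I^2*c*(g 0 0 1)*(g 1 0 0)*(g 2 1 0) + (-5/96)*s2^3*s3*I^3*c*(g 0 0 1)*(g 1 0 1)*(g 2 1 0) + (-1/48)*s2^3*s3*I^3*c*(g 0 0 1)*(g 1 0 0)*(g 2 1 0) + (-5/128)*s2^3*s3*I^4*c*(g 0 0 1)*(g 1 0 1)*(g 2 1 0) + (-1/192)*s2^3*s3*I^4*c*(g 0 0 1)*(g 1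 0 0)*(g 2 1 0) + (-1/64)*s2^3*s3*I^5*c*(g 0 0 1)*(g 1 0 1)*(g 2 1 0) + (-1/384)*s2^3*s3*I^6*c*(g 0 0 1)*(g 1 0 1)*(g 2 1 0) + (-1/768)*s2^4*s3*c*(g 0 0 1)*(g 1 0 1)*(g 2 1 1) + (-1/384)*s2^4*s3*c*(g 0 0 1)*(g 1 0 0)*(g 2 1 1) + (-7/768)*s2^4*s3*I*c*(g 0 0 1)*(g 1 0 1)*(g 2 1 1) + (-5/384)*s2^4*s3*I*c*(g 0 0 1)*(g 1 0 0)*(g 2 1 1) + (-7/256)*s2^4*s3*I^2*c*(g 0 0 1)*(g 1 0 1)*(g 2 1 1) + (-5/192)*s2^4*s3*I^2*c*(g 0 0 1)*(g 1 0 0)*(g 2 1 1) + (-35/768)*s2^4*s3*I^3*c*(g 0 0 1)*(g 1 0 1)*(g 2 1 1) + (-5/192)*s2^4*s3*I^3*c*(g 0 0 1)*(g 1 0 0)*(g 2 1 1) + (-35/768)*s2^4*s3*I^4*c*(g 0 0 1)*(g 1 0 1)*(g 2 1 1) + (-5/384)*s2^4*s3*I^4*c*(g 0 0 1)*(g 1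 0 0)*(g 2 1 1) + (-7/256)*s2^4*s3*I^5*c*(g 0 0 1)*(g 1 0 1)*(g 2 1 1) + (-1/384)*s2^4*s3*I^5*c*(g 0 0 1)*(g 1 0 0)*(g 2 1 1) + (-7/768)*s2^4*s3*I^6*c*(g 0 0 1)*(g 1 0 1)*(g 2 1 1) + (-1/768)*s2^4*s3*I^7*c*(g 0 0 1)*(g 1 0 1)*(g 2 1 1) + (-1/768)*s2^5*s3*c*(g 0 0 1)*(g 1 0 1)*(g 2 1 0) + (-1/128)*s2^5*s3*I*c*(g 0 0 1)*(g 1 0 1)*(g 2 1 0) + (-5/256)*s2^5*s3*I^2*c*(g 0 0 1)*(g 1 0 1)*(g 2 1 0) + (-5/192)*s2^5*s3*I^3*c*(g 0 0 1)*(g 1 0 1)*(g 2 1 0) + (-5/256)*s2^5*s3*I^4*c*(g 0 0 1)*(g 1 0 1)*(g 2 1 0) + (-1/128)*s2^5*s3*I^5*c*(g 0 0 1)*(g 1 0 1)*(g 2 1 0) + (-1/768)*s2^5*s3*I^6*c*(g 0 0 1)*(g 1 0 1)*(g 2 1 0) + (-1/1536)*s2^6*s3*c*(g 0 0 1)*(g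 1 0 1)*(g 2 1 1) + (-7/1536)*s2^6*s3*I*c*(g 0 0 1)*(g 1 0 1)*(g 2 1 1) + (-7/512)*s2^6*s3*I^2*c*(g 0 0 1)*(g 1 0 1)*(g 2 1 1) + (-35/1536)*s2^6*s3*I^3*c*(g 0 0 1)*(g 1 0 1)*(g 2 1 1) + (-35/1536)*s2^6*s3*I^4*c*(g 0 0 1)*(g 1 0 1)*(g 2 1 1) + (-7/512)*s2^6*s3*I^5*c*(g 0 0 1)*(g 1 0 1)*(g 2 1 1) + (-7/1536)*s2^6*s3*I^6*c*(g 0 0 1)*(g 1 0 1)*(g 2 1 1) + (-1/1536)*s2^6*s3*I^7*c*(g 0 0 1)*(g 1 0 1)*(g 2 1 1))*hs2 + (0)*hs3 + ((-1/96)*s3*c*(g 0 0 1)*(g 1 0 1)*(g 2 1 1) + (1/6)*s3*c*(g 0 0 1)*(g 1 0 1)*(g 2 1 0) + (-5/48)*s3*c*(g 0 0 1)*(g 1 0 0)*(g 2 1 1) + (-1/24)*s3*c*(g 0 0 0)*(g 1 0 1)*(g 2 1 1) + (1/6)*s3*c*(g 0 0 0)*(g 1 0 1)*(g 2 1 0)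 + (-5/32)*s3*I*c*(g 0 0 1)*(g 1 0 1)*(g 2 1 1) + (-3/16)*s3*I*c*(g 0 0 1)*(g 1 0 0)*(g 2 1 1) + (-1/24)*s3*I*c*(g 0 0 0)*(g 1 0 1)*(g 2 1 1) + (-7/24)*s3*I^2*c*(g 0 0 1)*(g 1 0 1)*(g 2 1 1) + (-5/48)*s3*I^2*c*(g 0 0 1)*(g 1 0 0)*(g 2 1 1) + (-5/24)*s3*I^3*c*(g 0 0 1)*(g 1 0 1)*(g 2 1 1) + (-1/48)*s3*I^3*c*(g 0 0 1)*(g 1 0 0)*(g 2 1 1) + (-7/96)*s3*I^4*c*(g 0 0 1)*(g 1 0 1)*(g 2 1 1) + (-1/96)*s3*I^5*c*(g 0 0 1)*(g 1 0 1)*(g 2 1 1) + (1/12)*s2*s3*c*(g 0 0 1)*(g 1 0 1)*(g 2 1 1) + (-3/32)*s2*s3*c*(g 0 0 1)*(g 1 0 1)*(g 2 1 0) + (1/12)*s2*s3*c*(g 0 0 1)*(g 1 0 0)*(g 2 1 1) + (-1/48)*s2*s3*c*(g 0 0 1)*(g 1 0 0)*(g 2 1 0) + (1/12)*s2*s3*c*(g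 0 0 0)*(g 1 0 1)*(g 2 1 1) + (-1/8)*s2*s3*c*(g 0 0 0)*(g 1 0 1)*(g 2 1 0) + (1/12)*s2*s3*c*(g 0 0 0)*(g 1 0 0)*(g 2 1 1) + (-7/48)*s2*s3*I*c*(g 0 0 1)*(g 1 0 1)*(g 2 1 0) + (1/12)*s2*s3*I*c*(g 0 0 1)*(g 1 0 0)*(g 2 1 1) + (-1/12)*s2*s3*I*c*(g 0 0 1)*(g 1 0 0)*(g 2 1 0) + (-1/16)*s2*s3*I^2*c*(g 0 0 1)*(g 1 0 1)*(g 2 1 0) + (-5/48)*s2*s3*I^2*c*(g 0 0 1)*(g 1 0 0)*(g 2 1 0) + (1/12)*s2*s3*I^3*c*(g 0 0 1)*(g 1 0 1)*(g 2 1 1) + (-1/16)*s2*s3*I^3*c*(g 0 0 1)*(g 1 0 1)*(g 2 1 0) + (-1/12)*s2*s3*I^3*c*(g 0 0 1)*(g 1 0 0)*(g 2 1 1) + (-3/32)*s2*s3*I^4*c*(g 0 0 1)*(g 1 0 1)*(g 2 1 0) + (-1/12)*s2*s3*I^5*c*(g 0 0 1)*(g 1 0 1)*(g 2 1 1))*C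omplex.I_sq
  have t2 : A0*B1*C0 + D0*E1*F0 = s3/3 := by
    rw [hA0, hB1, hC0, hD0, hE1, hF0]
    linear_combination -h2 + ((-1/192)*s3*c*(g 0 0 1)*(g 1 1 1)*(g 2 0 1) + (1/12)*s3*c*(g 0 0 1)*(g 1 1 1)*(g 2 0 0) + (-5/96)*s3*c*(g 0 0 1)*(g 1 1 0)*(g 2 0 1) + (-1/48)*s3*c*(g 0 0 0)*(g 1 1 1)*(g 2 0 1) + (1/12)*s3*c*(g 0 0 0)*(g 1 1 1)*(g 2 0 0) + (-5/64)*s3*I*c*(g 0 0 1)*(g 1 1 1)*(g 2 0 1) + (-3/32)*s3*I*c*(g 0 0 1)*(g 1 1 0)*(g 2 0 1) + (-1/48)*s3*I*c*(g 0 0 0)*(g 1 1 1)*(g 2 0 1) + (-29/192)*s3*I^2*c*(g 0 0 1)*(g 1 1 1)*(g 2 0 1) + (1/12)*s3*I^2*c*(g 0 0 1)*(g 1 1 1)*(g 2 0 0) + (-5/48)*s3*I^2*c*(g 0 0 1)*(g 1 1 0)*(g 2 0 1) + (-1/48)*s3*I^2*c*(g 0 0 0)*(g 1 1 1)*(g 2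 0 1) + (1/12)*s3*I^2*c*(g 0 0 0)*(g 1 1 1)*(g 2 0 0) + (-35/192)*s3*I^3*c*(g 0 0 1)*(g 1 1 1)*(g 2 0 1) + (-5/48)*s3*I^3*c*(g 0 0 1)*(g 1 1 0)*(g 2 0 1) + (-1/48)*s3*I^3*c*(g 0 0 0)*(g 1 1 1)*(g 2 0 1) + (-35/192)*s3*I^4*c*(g 0 0 1)*(g 1 1 1)*(g 2 0 1) + (-5/96)*s3*I^4*c*(g 0 0 1)*(g 1 1 0)*(g 2 0 1) + (-7/64)*s3*I^5*c*(g 0 0 1)*(g 1 1 1)*(g 2 0 1) + (-1/96)*s3*I^5*c*(g 0 0 1)*(g 1 1 0)*(g 2 0 1) + (-7/192)*s3*I^6*c*(g 0 0 1)*(g 1 1 1)*(g 2 0 1) + (-1/192)*s3*I^7*c*(g 0 0 1)*(g 1 1 1)*(g 2 0 1) + (-1/192)*s2*s3*c*(g 0 0 1)*(g 1 1 1)*(g 2 0 0) + (7/96)*s2*s3*c*(g 0 0 1)*(g 1 1 0)*(g 2 0 0) + (-1/48)*s2*s3*c*(g 0 0 0)*(g 1 1 1)*(g 2 0 0) + (1/12)*s2*s3*c*(g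 0 0 0)*(g 1 1 0)*(g 2 0 0) + (-1/32)*s2*s3*I*c*(g 0 0 1)*(g 1 1 1)*(g 2 0 0) + (1/24)*s2*s3*I*c*(g 0 0 1)*(g 1 1 0)*(g 2 0 1) + (-1/24)*s2*s3*I*c*(g 0 0 1)*(g 1 1 0)*(g 2 0 0) + (-1/24)*s2*s3*I*c*(g 0 0 0)*(g 1 1 1)*(g 2 0 0) + (1/24)*s2*s3*I*c*(g 0 0 0)*(g 1 1 0)*(g 2 0 1) + (1/24)*s2*s3*I^2*c*(g 0 0 1)*(g 1 1 1)*(g 2 0 1) + (-5/64)*s2*s3*I^2*c*(g 0 0 1)*(g 1 1 1)*(g 2 0 0) + (1/24)*s2*s3*I^2*c*(g 0 0 1)*(g 1 1 0)*(g 2 0 1) + (-1/16)*s2*s3*I^2*c*(g 0 0 1)*(g 1 1 0)*(g 2 0 0) + (1/24)*s2*s3*I^2*c*(g 0 0 0)*(g 1 1 1)*(g 2 0 1) + (-1/48)*s2*s3*I^2*c*(g 0 0 0)*(g 1 1 1)*(g 2 0 0) + (1/24)*s2*s3*I^2*c*(g 0 0 0)*(g 1 1 0)*(g 2 0 1) +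 (1/24)*s2*s3*I^3*c*(g 0 0 1)*(g 1 1 1)*(g 2 0 1) + (-5/48)*s2*s3*I^3*c*(g 0 0 1)*(g 1 1 1)*(g 2 0 0) + (-1/24)*s2*s3*I^3*c*(g 0 0 1)*(g 1 1 0)*(g 2 0 0) + (1/24)*s2*s3*I^3*c*(g 0 0 0)*(g 1 1 1)*(g 2 0 1) + (-5/64)*s2*s3*I^4*c*(g 0 0 1)*(g 1 1 1)*(g 2 0 0) + (-1/96)*s2*s3*I^4*c*(g 0 0 1)*(g 1 1 0)*(g 2 0 0) + (-1/32)*s2*s3*I^5*c*(g 0 0 1)*(g 1 1 1)*(g 2 0 0) + (-1/192)*s2*s3*I^6*c*(g 0 0 1)*(g 1 1 1)*(g 2 0 0) + (-1/384)*s2^2*s3*c*(g 0 0 1)*(g 1 1 1)*(g 2 0 1) + (-1/192)*s2^2*s3*c*(g 0 0 1)*(g 1 1 0)*(g 2 0 1) + (-1/96)*s2^2*s3*c*(g 0 0 0)*(g 1 1 1)*(g 2 0 1) + (-7/384)*s2^2*s3*I*c*(g 0 0 1)*(g 1 1 1)*(g 2 0 1) + (-5/192)*s2^2*s3*I*c*(g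 0 0 1)*(g 1 1 0)*(g 2 0 1) + (-1/32)*s2^2*s3*I*c*(g 0 0 0)*(g 1 1 1)*(g 2 0 1) + (-7/128)*s2^2*s3*I^2*c*(g 0 0 1)*(g 1 1 1)*(g 2 0 1) + (-5/96)*s2^2*s3*I^2*c*(g 0 0 1)*(g 1 1 0)*(g 2 0 1) + (-1/32)*s2^2*s3*I^2*c*(g 0 0 0)*(g 1 1 1)*(g 2 0 1) + (-35/384)*s2^2*s3*I^3*c*(g 0 0 1)*(g 1 1 1)*(g 2 0 1) + (-5/96)*s2^2*s3*I^3*c*(g 0 0 1)*(g 1 1 0)*(g 2 0 1) + (-1/96)*s2^2*s3*I^3*c*(g 0 0 0)*(g 1 1 1)*(g 2 0 1) + (-35/384)*s2^2*s3*I^4*c*(g 0 0 1)*(g 1 1 1)*(g 2 0 1) + (-5/192)*s2^2*s3*I^4*c*(g 0 0 1)*(g 1 1 0)*(g 2 0 1) + (-7/128)*s2^2*s3*I^5*c*(g 0 0 1)*(g 1 1 1)*(g 2 0 1) + (-1/192)*s2^2*s3*I^5*c*(g 0 0 1)*(g 1 1 0)*(g 2 0 1) + (-7/384)*s2^2*s3*I^6*c*(g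 0 0 1)*(g 1 1 1)*(g 2 0 1) + (-1/384)*s2^2*s3*I^7*c*(g 0 0 1)*(g 1 1 1)*(g 2 0 1) + (-1/384)*s2^3*s3*c*(g 0 0 1)*(g 1 1 1)*(g 2 0 0) + (-1/192)*s2^3*s3*c*(g 0 0 1)*(g 1 1 0)*(g 2 0 0) + (-1/64)*s2^3*s3*I*c*(g 0 0 1)*(g 1 1 1)*(g 2 0 0) + (-1/48)*s2^3*s3*I*c*(g 0 0 1)*(g 1 1 0)*(g 2 0 0) + (-5/128)*s2^3*s3*I^2*c*(g 0 0 1)*(g 1 1 1)*(g 2 0 0) + (-1/32)*s2^3*s3*I^2*c*(g 0 0 1)*(g 1 1 0)*(g 2 0 0) + (-5/96)*s2^3*s3*I^3*c*(g 0 0 1)*(g 1 1 1)*(g 2 0 0) + (-1/48)*s2^3*s3*I^3*c*(g 0 0 1)*(g 1 1 0)*(g 2 0 0) + (-5/128)*s2^3*s3*I^4*c*(g 0 0 1)*(g 1 1 1)*(g 2 0 0) + (-1/192)*s2^3*s3*I^4*c*(g 0 0 1)*(g 1 1 0)*(g 2 0 0) + (-1/64)*s2^3*s3*I^5*c*(g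 0 0 1)*(g 1 1 1)*(g 2 0 0) + (-1/384)*s2^3*s3*I^6*c*(g 0 0 1)*(g 1 1 1)*(g 2 0 0) + (-1/768)*s2^4*s3*c*(g 0 0 1)*(g 1 1 1)*(g 2 0 1) + (-1/384)*s2^4*s3*c*(g 0 0 1)*(g 1 1 0)*(g 2 0 1) + (-7/768)*s2^4*s3*I*c*(g 0 0 1)*(g 1 1 1)*(g 2 0 1) + (-5/384)*s2^4*s3*I*c*(g 0 0 1)*(g 1 1 0)*(g 2 0 1) + (-7/256)*s2^4*s3*I^2*c*(g 0 0 1)*(g 1 1 1)*(g 2 0 1) + (-5/192)*s2^4*s3*I^2*c*(g 0 0 1)*(g 1 1 0)*(g 2 0 1) + (-35/768)*s2^4*s3*I^3*c*(g 0 0 1)*(g 1 1 1)*(g 2 0 1) + (-5/192)*s2^4*s3*I^3*c*(g 0 0 1)*(g 1 1 0)*(g 2 0 1) + (-35/768)*s2^4*s3*I^4*c*(g 0 0 1)*(g 1 1 1)*(g 2 0 1) + (-5/384)*s2^4*s3*I^4*c*(g 0 0 1)*(g 1 1 0)*(g 2 0 1) + (-7/256)*s2^4*s3*I^5*c*(g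 0 0 1)*(g 1 1 1)*(g 2 0 1) + (-1/384)*s2^4*s3*I^5*c*(g 0 0 1)*(g 1 1 0)*(g 2 0 1) + (-7/768)*s2^4*s3*I^6*c*(g 0 0 1)*(g 1 1 1)*(g 2 0 1) + (-1/768)*s2^4*s3*I^7*c*(g 0 0 1)*(g 1 1 1)*(g 2 0 1) + (-1/768)*s2^5*s3*c*(g 0 0 1)*(g 1 1 1)*(g 2 0 0) + (-1/128)*s2^5*s3*I*c*(g 0 0 1)*(g 1 1 1)*(g 2 0 0) + (-5/256)*s2^5*s3*I^2*c*(g 0 0 1)*(g 1 1 1)*(g 2 0 0) + (-5/192)*s2^5*s3*I^3*c*(g 0 0 1)*(g 1 1 1)*(g 2 0 0) + (-5/256)*s2^5*s3*I^4*c*(g 0 0 1)*(g 1 1 1)*(g 2 0 0) + (-1/128)*s2^5*s3*I^5*c*(g 0 0 1)*(g 1 1 1)*(g 2 0 0) + (-1/768)*s2^5*s3*I^6*c*(g 0 0 1)*(g 1 1 1)*(g 2 0 0) + (-1/1536)*s2^6*s3*c*(g 0 0 1)*(g 1 1 1)*(g 2 0 1) + (-7/1536)*s2^6*s3*I*c*(g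 0 0 1)*(g 1 1 1)*(g 2 0 1) + (-7/512)*s2^6*s3*I^2*c*(g 0 0 1)*(g 1 1 1)*(g 2 0 1) + (-35/1536)*s2^6*s3*I^3*c*(g 0 0 1)*(g 1 1 1)*(g 2 0 1) + (-35/1536)*s2^6*s3*I^4*c*(g 0 0 1)*(g 1 1 1)*(g 2 0 1) + (-7/512)*s2^6*s3*I^5*c*(g 0 0 1)*(g 1 1 1)*(g 2 0 1) + (-7/1536)*s2^6*s3*I^6*c*(g 0 0 1)*(g 1 1 1)*(g 2 0 1) + (-1/1536)*s2^6*s3*I^7*c*(g 0 0 1)*(g 1 1 1)*(g 2 0 1))*hs2 + (0)*hs3 + ((-1/96)*s3*c*(g 0 0 1)*(g 1 1 1)*(g 2 0 1) + (1/6)*s3*c*(g 0 0 1)*(g 1 1 1)*(g 2 0 0) + (-5/48)*s3*c*(g 0 0 1)*(g 1 1 0)*(g 2 0 1) + (-1/24)*s3*c*(g 0 0 0)*(g 1 1 1)*(g 2 0 1) + (1/6)*s3*c*(g 0 0 0)*(g 1 1 1)*(g 2 0 0) + (-5/32)*s3*I*c*(g 0 0 1)*(g 1 1 1)*(g 2 0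 1) + (-3/16)*s3*I*c*(g 0 0 1)*(g 1 1 0)*(g 2 0 1) + (-1/24)*s3*I*c*(g 0 0 0)*(g 1 1 1)*(g 2 0 1) + (-7/24)*s3*I^2*c*(g 0 0 1)*(g 1 1 1)*(g 2 0 1) + (-5/48)*s3*I^2*c*(g 0 0 1)*(g 1 1 0)*(g 2 0 1) + (-5/24)*s3*I^3*c*(g 0 0 1)*(g 1 1 1)*(g 2 0 1) + (-1/48)*s3*I^3*c*(g 0 0 1)*(g 1 1 0)*(g 2 0 1) + (-7/96)*s3*I^4*c*(g 0 0 1)*(g 1 1 1)*(g 2 0 1) + (-1/96)*s3*I^5*c*(g 0 0 1)*(g 1 1 1)*(g 2 0 1) + (1/12)*s2*s3*c*(g 0 0 1)*(g 1 1 1)*(g 2 0 1) + (-3/32)*s2*s3*c*(g 0 0 1)*(g 1 1 1)*(g 2 0 0) + (1/12)*s2*s3*c*(g 0 0 1)*(g 1 1 0)*(g 2 0 1) + (-1/48)*s2*s3*c*(g 0 0 1)*(g 1 1 0)*(g 2 0 0) + (1/12)*s2*s3*c*(g 0 0 0)*(g 1 1 1)*(g 2 0 1) + (-1/8)*s2*s3*c*(g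 0 0 0)*(g 1 1 1)*(g 2 0 0) + (1/12)*s2*s3*c*(g 0 0 0)*(g 1 1 0)*(g 2 0 1) + (-7/48)*s2*s3*I*c*(g 0 0 1)*(g 1 1 1)*(g 2 0 0) + (1/12)*s2*s3*I*c*(g 0 0 1)*(g 1 1 0)*(g 2 0 1) + (-1/12)*s2*s3*I*c*(g 0 0 1)*(g 1 1 0)*(g 2 0 0) + (-1/16)*s2*s3*I^2*c*(g 0 0 1)*(g 1 1 1)*(g 2 0 0) + (-5/48)*s2*s3*I^2*c*(g 0 0 1)*(g 1 1 0)*(g 2 0 0) + (1/12)*s2*s3*I^3*c*(g 0 0 1)*(g 1 1 1)*(g 2 0 1) + (-1/16)*s2*s3*I^3*c*(g 0 0 1)*(g 1 1 1)*(g 2 0 0) + (-1/12)*s2*s3*I^3*c*(g 0 0 1)*(g 1 1 0)*(g 2 0 1) + (-3/32)*s2*s3*I^4*c*(g 0 0 1)*(g 1 1 1)*(g 2 0 0) + (-1/12)*s2*s3*I^5*c*(g 0 0 1)*(g 1 1 1)*(g 2 0 1))*Complex.I_sq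
  have t3 : A0*B1*C1 + D0*E1*F1 = 0 := by
    rw [hA0, hB1, hC1, hD0, hE1, hF1]
    linear_combination -h3 + ((-1/192)*s3*c*(g 0 0 1)*(g 1 1 1)*(g 2 1 1) + (1/12)*s3*c*(g 0 0 1)*(g 1 1 1)*(g 2 1 0) + (-5/96)*s3*c*(g 0 0 1)*(g 1 1 0)*(g 2 1 1) + (-1/48)*s3*c*(g 0 0 0)*(g 1 1 1)*(g 2 1 1) + (1/12)*s3*c*(g 0 0 0)*(g 1 1 1)*(g 2 1 0) + (-5/64)*s3*I*c*(g 0 0 1)*(g 1 1 1)*(g 2 1 1) + (-3/32)*s3*I*c*(g 0 0 1)*(g 1 1 0)*(g 2 1 1) + (-1/48)*s3*I*c*(g 0 0 0)*(g 1 1 1)*(g 2 1 1) + (-29/192)*s3*I^2*c*(g 0 0 1)*(g 1 1 1)*(g 2 1 1) + (1/12)*s3*I^2*c*(g 0 0 1)*(g 1 1 1)*(g 2 1 0) + (-5/48)*s3*I^2*c*(g 0 0 1)*(g 1 1 0)*(g 2 1 1) + (-1/48)*s3*I^2*c*(g 0 0 0)*(g 1 1 1)*(g 2 1 1) + (1/12)*s3*I^2*c*(g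 0 0 0)*(g 1 1 1)*(g 2 1 0) + (-35/192)*s3*I^3*c*(g 0 0 1)*(g 1 1 1)*(g 2 1 1) + (-5/48)*s3*I^3*c*(g 0 0 1)*(g 1 1 0)*(g 2 1 1) + (-1/48)*s3*I^3*c*(g 0 0 0)*(g 1 1 1)*(g 2 1 1) + (-35/192)*s3*I^4*c*(g 0 0 1)*(g 1 1 1)*(g 2 1 1) + (-5/96)*s3*I^4*c*(g 0 0 1)*(g 1 1 0)*(g 2 1 1) + (-7/64)*s3*I^5*c*(g 0 0 1)*(g 1 1 1)*(g 2 1 1) + (-1/96)*s3*I^5*c*(g 0 0 1)*(g 1 1 0)*(g 2 1 1) + (-7/192)*s3*I^6*c*(g 0 0 1)*(g 1 1 1)*(g 2 1 1) + (-1/192)*s3*I^7*c*(g 0 0 1)*(g 1 1 1)*(g 2 1 1) + (-1/192)*s2*s3*c*(g 0 0 1)*(g 1 1 1)*(g 2 1 0) + (7/96)*s2*s3*c*(g 0 0 1)*(g 1 1 0)*(g 2 1 0) + (-1/48)*s2*s3*c*(g 0 0 0)*(g 1 1 1)*(g 2 1 0) + (1/12)*s2*s3*c*(g 0 0 0)*(g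 1 1 0)*(g 2 1 0) + (-1/32)*s2*s3*I*c*(g 0 0 1)*(g 1 1 1)*(g 2 1 0) + (1/24)*s2*s3*I*c*(g 0 0 1)*(g 1 1 0)*(g 2 1 1) + (-1/24)*s2*s3*I*c*(g 0 0 1)*(g 1 1 0)*(g 2 1 0) + (-1/24)*s2*s3*I*c*(g 0 0 0)*(g 1 1 1)*(g 2 1 0) + (1/24)*s2*s3*I*c*(g 0 0 0)*(g 1 1 0)*(g 2 1 1) + (1/24)*s2*s3*I^2*c*(g 0 0 1)*(g 1 1 1)*(g 2 1 1) + (-5/64)*s2*s3*I^2*c*(g 0 0 1)*(g 1 1 1)*(g 2 1 0) + (1/24)*s2*s3*I^2*c*(g 0 0 1)*(g 1 1 0)*(g 2 1 1) + (-1/16)*s2*s3*I^2*c*(g 0 0 1)*(g 1 1 0)*(g 2 1 0) + (1/24)*s2*s3*I^2*c*(g 0 0 0)*(g 1 1 1)*(g 2 1 1) + (-1/48)*s2*s3*I^2*c*(g 0 0 0)*(g 1 1 1)*(g 2 1 0) + (1/24)*s2*s3*I^2*c*(g 0 0 0)*(g 1 1 0)*(g 2 1 1) + (1/24)*s2*s3*I^3*c*(g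 0 0 1)*(g 1 1 1)*(g 2 1 1) + (-5/48)*s2*s3*I^3*c*(g 0 0 1)*(g 1 1 1)*(g 2 1 0) + (-1/24)*s2*s3*I^3*c*(g 0 0 1)*(g 1 1 0)*(g 2 1 0) + (1/24)*s2*s3*I^3*c*(g 0 0 0)*(g 1 1 1)*(g 2 1 1) + (-5/64)*s2*s3*I^4*c*(g 0 0 1)*(g 1 1 1)*(g 2 1 0) + (-1/96)*s2*s3*I^4*c*(g 0 0 1)*(g 1 1 0)*(g 2 1 0) + (-1/32)*s2*s3*I^5*c*(g 0 0 1)*(g 1 1 1)*(g 2 1 0) + (-1/192)*s2*s3*I^6*c*(g 0 0 1)*(g 1 1 1)*(g 2 1 0) + (-1/384)*s2^2*s3*c*(g 0 0 1)*(g 1 1 1)*(g 2 1 1) + (-1/192)*s2^2*s3*c*(g 0 0 1)*(g 1 1 0)*(g 2 1 1) + (-1/96)*s2^2*s3*c*(g 0 0 0)*(g 1 1 1)*(g 2 1 1) + (-7/384)*s2^2*s3*I*c*(g 0 0 1)*(g 1 1 1)*(g 2 1 1) + (-5/192)*s2^2*s3*I*c*(g 0 0 1)*(g 1 1 0)*(g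 2 1 1) + (-1/32)*s2^2*s3*I*c*(g 0 0 0)*(g 1 1 1)*(g 2 1 1) + (-7/128)*s2^2*s3*I^2*c*(g 0 0 1)*(g 1 1 1)*(g 2 1 1) + (-5/96)*s2^2*s3*I^2*c*(g 0 0 1)*(g 1 1 0)*(g 2 1 1) + (-1/32)*s2^2*s3*I^2*c*(g 0 0 0)*(g 1 1 1)*(g 2 1 1) + (-35/384)*s2^2*s3*I^3*c*(g 0 0 1)*(g 1 1 1)*(g 2 1 1) + (-5/96)*s2^2*s3*I^3*c*(g 0 0 1)*(g 1 1 0)*(g 2 1 1) + (-1/96)*s2^2*s3*I^3*c*(g 0 0 0)*(g 1 1 1)*(g 2 1 1) + (-35/384)*s2^2*s3*I^4*c*(g 0 0 1)*(g 1 1 1)*(g 2 1 1) + (-5/192)*s2^2*s3*I^4*c*(g 0 0 1)*(g 1 1 0)*(g 2 1 1) + (-7/128)*s2^2*s3*I^5*c*(g 0 0 1)*(g 1 1 1)*(g 2 1 1) + (-1/192)*s2^2*s3*I^5*c*(g 0 0 1)*(g 1 1 0)*(g 2 1 1) + (-7/384)*s2^2*s3*I^6*c*(g 0 0 1)*(g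 1 1 1)*(g 2 1 1) + (-1/384)*s2^2*s3*I^7*c*(g 0 0 1)*(g 1 1 1)*(g 2 1 1) + (-1/384)*s2^3*s3*c*(g 0 0 1)*(g 1 1 1)*(g 2 1 0) + (-1/192)*s2^3*s3*c*(g 0 0 1)*(g 1 1 0)*(g 2 1 0) + (-1/64)*s2^3*s3*I*c*(g 0 0 1)*(g 1 1 1)*(g 2 1 0) + (-1/48)*s2^3*s3*I*c*(g 0 0 1)*(g 1 1 0)*(g 2 1 0) + (-5/128)*s2^3*s3*I^2*c*(g 0 0 1)*(g 1 1 1)*(g 2 1 0) + (-1/32)*s2^3*s3*I^2*c*(g 0 0 1)*(g 1 1 0)*(g 2 1 0) + (-5/96)*s2^3*s3*I^3*c*(g 0 0 1)*(g 1 1 1)*(g 2 1 0) + (-1/48)*s2^3*s3*I^3*c*(g 0 0 1)*(g 1 1 0)*(g 2 1 0) + (-5/128)*s2^3*s3*I^4*c*(g 0 0 1)*(g 1 1 1)*(g 2 1 0) + (-1/192)*s2^3*s3*I^4*c*(g 0 0 1)*(g 1 1 0)*(g 2 1 0) + (-1/64)*s2^3*s3*I^5*c*(g 0 0 1)*(g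 1 1 1)*(g 2 1 0) + (-1/384)*s2^3*s3*I^6*c*(g 0 0 1)*(g 1 1 1)*(g 2 1 0) + (-1/768)*s2^4*s3*c*(g 0 0 1)*(g 1 1 1)*(g 2 1 1) + (-1/384)*s2^4*s3*c*(g 0 0 1)*(g 1 1 0)*(g 2 1 1) + (-7/768)*s2^4*s3*I*c*(g 0 0 1)*(g 1 1 1)*(g 2 1 1) + (-5/384)*s2^4*s3*I*c*(g 0 0 1)*(g 1 1 0)*(g 2 1 1) + (-7/256)*s2^4*s3*I^2*c*(g 0 0 1)*(g 1 1 1)*(g 2 1 1) + (-5/192)*s2^4*s3*I^2*c*(g 0 0 1)*(g 1 1 0)*(g 2 1 1) + (-35/768)*s2^4*s3*I^3*c*(g 0 0 1)*(g 1 1 1)*(g 2 1 1) + (-5/192)*s2^4*s3*I^3*c*(g 0 0 1)*(g 1 1 0)*(g 2 1 1) + (-35/768)*s2^4*s3*I^4*c*(g 0 0 1)*(g 1 1 1)*(g 2 1 1) + (-5/384)*s2^4*s3*I^4*c*(g 0 0 1)*(g 1 1 0)*(g 2 1 1) + (-7/256)*s2^4*s3*I^5*c*(g 0 0 1)*(g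 1 1 1)*(g 2 1 1) + (-1/384)*s2^4*s3*I^5*c*(g 0 0 1)*(g 1 1 0)*(g 2 1 1) + (-7/768)*s2^4*s3*I^6*c*(g 0 0 1)*(g 1 1 1)*(g 2 1 1) + (-1/768)*s2^4*s3*I^7*c*(g 0 0 1)*(g 1 1 1)*(g 2 1 1) + (-1/768)*s2^5*s3*c*(g 0 0 1)*(g 1 1 1)*(g 2 1 0) + (-1/128)*s2^5*s3*I*c*(g 0 0 1)*(g 1 1 1)*(g 2 1 0) + (-5/256)*s2^5*s3*I^2*c*(g 0 0 1)*(g 1 1 1)*(g 2 1 0) + (-5/192)*s2^5*s3*I^3*c*(g 0 0 1)*(g 1 1 1)*(g 2 1 0) + (-5/256)*s2^5*s3*I^4*c*(g 0 0 1)*(g 1 1 1)*(g 2 1 0) + (-1/128)*s2^5*s3*I^5*c*(g 0 0 1)*(g 1 1 1)*(g 2 1 0) + (-1/768)*s2^5*s3*I^6*c*(g 0 0 1)*(g 1 1 1)*(g 2 1 0) + (-1/1536)*s2^6*s3*c*(g 0 0 1)*(g 1 1 1)*(g 2 1 1) + (-7/1536)*s2^6*s3*I*c*(g 0 0 1)*(g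 1 1 1)*(g 2 1 1) + (-7/512)*s2^6*s3*I^2*c*(g 0 0 1)*(g 1 1 1)*(g 2 1 1) + (-35/1536)*s2^6*s3*I^3*c*(g 0 0 1)*(g 1 1 1)*(g 2 1 1) + (-35/1536)*s2^6*s3*I^4*c*(g 0 0 1)*(g 1 1 1)*(g 2 1 1) + (-7/512)*s2^6*s3*I^5*c*(g 0 0 1)*(g 1 1 1)*(g 2 1 1) + (-7/1536)*s2^6*s3*I^6*c*(g 0 0 1)*(g 1 1 1)*(g 2 1 1) + (-1/1536)*s2^6*s3*I^7*c*(g 0 0 1)*(g 1 1 1)*(g 2 1 1))*hs2 + (0)*hs3 + ((-1/96)*s3*c*(g 0 0 1)*(g 1 1 1)*(g 2 1 1) + (1/6)*s3*c*(g 0 0 1)*(g 1 1 1)*(g 2 1 0) + (-5/48)*s3*c*(g 0 0 1)*(g 1 1 0)*(g 2 1 1) + (-1/24)*s3*c*(g 0 0 0)*(g 1 1 1)*(g 2 1 1) + (1/6)*s3*c*(g 0 0 0)*(g 1 1 1)*(g 2 1 0) + (-5/32)*s3*I*c*(g 0 0 1)*(g 1 1 1)*(g 2 1 1) + (-3/16)*s3*I*c*(g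 0 0 1)*(g 1 1 0)*(g 2 1 1) + (-1/24)*s3*I*c*(g 0 0 0)*(g 1 1 1)*(g 2 1 1) + (-7/24)*s3*I^2*c*(g 0 0 1)*(g 1 1 1)*(g 2 1 1) + (-5/48)*s3*I^2*c*(g 0 0 1)*(g 1 1 0)*(g 2 1 1) + (-5/24)*s3*I^3*c*(g 0 0 1)*(g 1 1 1)*(g 2 1 1) + (-1/48)*s3*I^3*c*(g 0 0 1)*(g 1 1 0)*(g 2 1 1) + (-7/96)*s3*I^4*c*(g 0 0 1)*(g 1 1 1)*(g 2 1 1) + (-1/96)*s3*I^5*c*(g 0 0 1)*(g 1 1 1)*(g 2 1 1) + (1/12)*s2*s3*c*(g 0 0 1)*(g 1 1 1)*(g 2 1 1) + (-3/32)*s2*s3*c*(g 0 0 1)*(g 1 1 1)*(g 2 1 0) + (1/12)*s2*s3*c*(g 0 0 1)*(g 1 1 0)*(g 2 1 1) + (-1/48)*s2*s3*c*(g 0 0 1)*(g 1 1 0)*(g 2 1 0) + (1/12)*s2*s3*c*(g 0 0 0)*(g 1 1 1)*(g 2 1 1) + (-1/8)*s2*s3*c*(g 0 0 0)*(g 1 1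 1)*(g 2 1 0) + (1/12)*s2*s3*c*(g 0 0 0)*(g 1 1 0)*(g 2 1 1) + (-7/48)*s2*s3*I*c*(g 0 0 1)*(g 1 1 1)*(g 2 1 0) + (1/12)*s2*s3*I*c*(g 0 0 1)*(g 1 1 0)*(g 2 1 1) + (-1/12)*s2*s3*I*c*(g 0 0 1)*(g 1 1 0)*(g 2 1 0) + (-1/16)*s2*s3*I^2*c*(g 0 0 1)*(g 1 1 1)*(g 2 1 0) + (-5/48)*s2*s3*I^2*c*(g 0 0 1)*(g 1 1 0)*(g 2 1 0) + (1/12)*s2*s3*I^3*c*(g 0 0 1)*(g 1 1 1)*(g 2 1 1) + (-1/16)*s2*s3*I^3*c*(g 0 0 1)*(g 1 1 1)*(g 2 1 0) + (-1/12)*s2*s3*I^3*c*(g 0 0 1)*(g 1 1 0)*(g 2 1 1) + (-3/32)*s2*s3*I^4*c*(g 0 0 1)*(g 1 1 1)*(g 2 1 0) + (-1/12)*s2*s3*I^5*c*(g 0 0 1)*(g 1 1 1)*(g 2 1 1))*Complex.I_sq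
  have t4 : A1*B0*C0 + D1*E0*F0 = s3/3 := by
    rw [hA1, hB0, hC0, hD1, hE0, hF0]
    linear_combination -h4 + ((-1/192)*s3*c*(g 0 1 1)*(g 1 0 1)*(g 2 0 1) + (1/12)*s3*c*(g 0 1 1)*(g 1 0 1)*(g 2 0 0) + (-5/96)*s3*c*(g 0 1 1)*(g 1 0 0)*(g 2 0 1) + (-1/48)*s3*c*(g 0 1 0)*(g 1 0 1)*(g 2 0 1) + (1/12)*s3*c*(g 0 1 0)*(g 1 0 1)*(g 2 0 0) + (-5/64)*s3*I*c*(g 0 1 1)*(g 1 0 1)*(g 2 0 1) + (-3/32)*s3*I*c*(g 0 1 1)*(g 1 0 0)*(g 2 0 1) + (-1/48)*s3*I*c*(g 0 1 0)*(g 1 0 1)*(g 2 0 1) + (-29/192)*s3*I^2*c*(g 0 1 1)*(g 1 0 1)*(g 2 0 1) + (1/12)*s3*I^2*c*(g 0 1 1)*(g 1 0 1)*(g 2 0 0) + (-5/48)*s3*I^2*c*(g 0 1 1)*(g 1 0 0)*(g 2 0 1) + (-1/48)*s3*I^2*c*(g 0 1 0)*(g 1 0 1)*(g 2 0 1) + (1/12)*s3*I^2*c*(g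 0 1 0)*(g 1 0 1)*(g 2 0 0) + (-35/192)*s3*I^3*c*(g 0 1 1)*(g 1 0 1)*(g 2 0 1) + (-5/48)*s3*I^3*c*(g 0 1 1)*(g 1 0 0)*(g 2 0 1) + (-1/48)*s3*I^3*c*(g 0 1 0)*(g 1 0 1)*(g 2 0 1) + (-35/192)*s3*I^4*c*(g 0 1 1)*(g 1 0 1)*(g 2 0 1) + (-5/96)*s3*I^4*c*(g 0 1 1)*(g 1 0 0)*(g 2 0 1) + (-7/64)*s3*I^5*c*(g 0 1 1)*(g 1 0 1)*(g 2 0 1) + (-1/96)*s3*I^5*c*(g 0 1 1)*(g 1 0 0)*(g 2 0 1) + (-7/192)*s3*I^6*c*(g 0 1 1)*(g 1 0 1)*(g 2 0 1) + (-1/192)*s3*I^7*c*(g 0 1 1)*(g 1 0 1)*(g 2 0 1) + (-1/192)*s2*s3*c*(g 0 1 1)*(g 1 0 1)*(g 2 0 0) + (7/96)*s2*s3*c*(g 0 1 1)*(g 1 0 0)*(g 2 0 0) + (-1/48)*s2*s3*c*(g 0 1 0)*(g 1 0 1)*(g 2 0 0) + (1/12)*s2*s3*c*(g 0 1 0)*(g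 1 0 0)*(g 2 0 0) + (-1/32)*s2*s3*I*c*(g 0 1 1)*(g 1 0 1)*(g 2 0 0) + (1/24)*s2*s3*I*c*(g 0 1 1)*(g 1 0 0)*(g 2 0 1) + (-1/24)*s2*s3*I*c*(g 0 1 1)*(g 1 0 0)*(g 2 0 0) + (-1/24)*s2*s3*I*c*(g 0 1 0)*(g 1 0 1)*(g 2 0 0) + (1/24)*s2*s3*I*c*(g 0 1 0)*(g 1 0 0)*(g 2 0 1) + (1/24)*s2*s3*I^2*c*(g 0 1 1)*(g 1 0 1)*(g 2 0 1) + (-5/64)*s2*s3*I^2*c*(g 0 1 1)*(g 1 0 1)*(g 2 0 0) + (1/24)*s2*s3*I^2*c*(g 0 1 1)*(g 1 0 0)*(g 2 0 1) + (-1/16)*s2*s3*I^2*c*(g 0 1 1)*(g 1 0 0)*(g 2 0 0) + (1/24)*s2*s3*I^2*c*(g 0 1 0)*(g 1 0 1)*(g 2 0 1) + (-1/48)*s2*s3*I^2*c*(g 0 1 0)*(g 1 0 1)*(g 2 0 0) + (1/24)*s2*s3*I^2*c*(g 0 1 0)*(g 1 0 0)*(g 2 0 1) + (1/24)*s2*s3*I^3*c*(g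 0 1 1)*(g 1 0 1)*(g 2 0 1) + (-5/48)*s2*s3*I^3*c*(g 0 1 1)*(g 1 0 1)*(g 2 0 0) + (-1/24)*s2*s3*I^3*c*(g 0 1 1)*(g 1 0 0)*(g 2 0 0) + (1/24)*s2*s3*I^3*c*(g 0 1 0)*(g 1 0 1)*(g 2 0 1) + (-5/64)*s2*s3*I^4*c*(g 0 1 1)*(g 1 0 1)*(g 2 0 0) + (-1/96)*s2*s3*I^4*c*(g 0 1 1)*(g 1 0 0)*(g 2 0 0) + (-1/32)*s2*s3*I^5*c*(g 0 1 1)*(g 1 0 1)*(g 2 0 0) + (-1/192)*s2*s3*I^6*c*(g 0 1 1)*(g 1 0 1)*(g 2 0 0) + (-1/384)*s2^2*s3*c*(g 0 1 1)*(g 1 0 1)*(g 2 0 1) + (-1/192)*s2^2*s3*c*(g 0 1 1)*(g 1 0 0)*(g 2 0 1) + (-1/96)*s2^2*s3*c*(g 0 1 0)*(g 1 0 1)*(g 2 0 1) + (-7/384)*s2^2*s3*I*c*(g 0 1 1)*(g 1 0 1)*(g 2 0 1) + (-5/192)*s2^2*s3*I*c*(g 0 1 1)*(g 1 0 0)*(g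 2 0 1) + (-1/32)*s2^2*s3*I*c*(g 0 1 0)*(g 1 0 1)*(g 2 0 1) + (-7/128)*s2^2*s3*I^2*c*(g 0 1 1)*(g 1 0 1)*(g 2 0 1) + (-5/96)*s2^2*s3*I^2*c*(g 0 1 1)*(g 1 0 0)*(g 2 0 1) + (-1/32)*s2^2*s3*I^2*c*(g 0 1 0)*(g 1 0 1)*(g 2 0 1) + (-35/384)*s2^2*s3*I^3*c*(g 0 1 1)*(g 1 0 1)*(g 2 0 1) + (-5/96)*s2^2*s3*I^3*c*(g 0 1 1)*(g 1 0 0)*(g 2 0 1) + (-1/96)*s2^2*s3*I^3*c*(g 0 1 0)*(g 1 0 1)*(g 2 0 1) + (-35/384)*s2^2*s3*I^4*c*(g 0 1 1)*(g 1 0 1)*(g 2 0 1) + (-5/192)*s2^2*s3*I^4*c*(g 0 1 1)*(g 1 0 0)*(g 2 0 1) + (-7/128)*s2^2*s3*I^5*c*(g 0 1 1)*(g 1 0 1)*(g 2 0 1) + (-1/192)*s2^2*s3*I^5*c*(g 0 1 1)*(g 1 0 0)*(g 2 0 1) + (-7/384)*s2^2*s3*I^6*c*(g 0 1 1)*(g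 1 0 1)*(g 2 0 1) + (-1/384)*s2^2*s3*I^7*c*(g 0 1 1)*(g 1 0 1)*(g 2 0 1) + (-1/384)*s2^3*s3*c*(g 0 1 1)*(g 1 0 1)*(g 2 0 0) + (-1/192)*s2^3*s3*c*(g 0 1 1)*(g 1 0 0)*(g 2 0 0) + (-1/64)*s2^3*s3*I*c*(g 0 1 1)*(g 1 0 1)*(g 2 0 0) + (-1/48)*s2^3*s3*I*c*(g 0 1 1)*(g 1 0 0)*(g 2 0 0) + (-5/128)*s2^3*s3*I^2*c*(g 0 1 1)*(g 1 0 1)*(g 2 0 0) + (-1/32)*s2^3*s3*I^2*c*(g 0 1 1)*(g 1 0 0)*(g 2 0 0) + (-5/96)*s2^3*s3*I^3*c*(g 0 1 1)*(g 1 0 1)*(g 2 0 0) + (-1/48)*s2^3*s3*I^3*c*(g 0 1 1)*(g 1 0 0)*(g 2 0 0) + (-5/128)*s2^3*s3*I^4*c*(g 0 1 1)*(g 1 0 1)*(g 2 0 0) + (-1/192)*s2^3*s3*I^4*c*(g 0 1 1)*(g 1 0 0)*(g 2 0 0) + (-1/64)*s2^3*s3*I^5*c*(g 0 1 1)*(g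 1 0 1)*(g 2 0 0) + (-1/384)*s2^3*s3*I^6*c*(g 0 1 1)*(g 1 0 1)*(g 2 0 0) + (-1/768)*s2^4*s3*c*(g 0 1 1)*(g 1 0 1)*(g 2 0 1) + (-1/384)*s2^4*s3*c*(g 0 1 1)*(g 1 0 0)*(g 2 0 1) + (-7/768)*s2^4*s3*I*c*(g 0 1 1)*(g 1 0 1)*(g 2 0 1) + (-5/384)*s2^4*s3*I*c*(g 0 1 1)*(g 1 0 0)*(g 2 0 1) + (-7/256)*s2^4*s3*I^2*c*(g 0 1 1)*(g 1 0 1)*(g 2 0 1) + (-5/192)*s2^4*s3*I^2*c*(g 0 1 1)*(g 1 0 0)*(g 2 0 1) + (-35/768)*s2^4*s3*I^3*c*(g 0 1 1)*(g 1 0 1)*(g 2 0 1) + (-5/192)*s2^4*s3*I^3*c*(g 0 1 1)*(g 1 0 0)*(g 2 0 1) + (-35/768)*s2^4*s3*I^4*c*(g 0 1 1)*(g 1 0 1)*(g 2 0 1) + (-5/384)*s2^4*s3*I^4*c*(g 0 1 1)*(g 1 0 0)*(g 2 0 1) + (-7/256)*s2^4*s3*I^5*c*(g 0 1 1)*(g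 1 0 1)*(g 2 0 1) + (-1/384)*s2^4*s3*I^5*c*(g 0 1 1)*(g 1 0 0)*(g 2 0 1) + (-7/768)*s2^4*s3*I^6*c*(g 0 1 1)*(g 1 0 1)*(g 2 0 1) + (-1/768)*s2^4*s3*I^7*c*(g 0 1 1)*(g 1 0 1)*(g 2 0 1) + (-1/768)*s2^5*s3*c*(g 0 1 1)*(g 1 0 1)*(g 2 0 0) + (-1/128)*s2^5*s3*I*c*(g 0 1 1)*(g 1 0 1)*(g 2 0 0) + (-5/256)*s2^5*s3*I^2*c*(g 0 1 1)*(g 1 0 1)*(g 2 0 0) + (-5/192)*s2^5*s3*I^3*c*(g 0 1 1)*(g 1 0 1)*(g 2 0 0) + (-5/256)*s2^5*s3*I^4*c*(g 0 1 1)*(g 1 0 1)*(g 2 0 0) + (-1/128)*s2^5*s3*I^5*c*(g 0 1 1)*(g 1 0 1)*(g 2 0 0) + (-1/768)*s2^5*s3*I^6*c*(g 0 1 1)*(g 1 0 1)*(g 2 0 0) + (-1/1536)*s2^6*s3*c*(g 0 1 1)*(g 1 0 1)*(g 2 0 1) + (-7/1536)*s2^6*s3*I*c*(g 0 1 1)*(g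 1 0 1)*(g 2 0 1) + (-7/512)*s2^6*s3*I^2*c*(g 0 1 1)*(g 1 0 1)*(g 2 0 1) + (-35/1536)*s2^6*s3*I^3*c*(g 0 1 1)*(g 1 0 1)*(g 2 0 1) + (-35/1536)*s2^6*s3*I^4*c*(g 0 1 1)*(g 1 0 1)*(g 2 0 1) + (-7/512)*s2^6*s3*I^5*c*(g 0 1 1)*(g 1 0 1)*(g 2 0 1) + (-7/1536)*s2^6*s3*I^6*c*(g 0 1 1)*(g 1 0 1)*(g 2 0 1) + (-1/1536)*s2^6*s3*I^7*c*(g 0 1 1)*(g 1 0 1)*(g 2 0 1))*hs2 + (0)*hs3 + ((-1/96)*s3*c*(g 0 1 1)*(g 1 0 1)*(g 2 0 1) + (1/6)*s3*c*(g 0 1 1)*(g 1 0 1)*(g 2 0 0) + (-5/48)*s3*c*(g 0 1 1)*(g 1 0 0)*(g 2 0 1) + (-1/24)*s3*c*(g 0 1 0)*(g 1 0 1)*(g 2 0 1) + (1/6)*s3*c*(g 0 1 0)*(g 1 0 1)*(g 2 0 0) + (-5/32)*s3*I*c*(g 0 1 1)*(g 1 0 1)*(g 2 0 1) + (-3/16)*s3*I*c*(g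 0 1 1)*(g 1 0 0)*(g 2 0 1) + (-1/24)*s3*I*c*(g 0 1 0)*(g 1 0 1)*(g 2 0 1) + (-7/24)*s3*I^2*c*(g 0 1 1)*(g 1 0 1)*(g 2 0 1) + (-5/48)*s3*I^2*c*(g 0 1 1)*(g 1 0 0)*(g 2 0 1) + (-5/24)*s3*I^3*c*(g 0 1 1)*(g 1 0 1)*(g 2 0 1) + (-1/48)*s3*I^3*c*(g 0 1 1)*(g 1 0 0)*(g 2 0 1) + (-7/96)*s3*I^4*c*(g 0 1 1)*(g 1 0 1)*(g 2 0 1) + (-1/96)*s3*I^5*c*(g 0 1 1)*(g 1 0 1)*(g 2 0 1) + (1/12)*s2*s3*c*(g 0 1 1)*(g 1 0 1)*(g 2 0 1) + (-3/32)*s2*s3*c*(g 0 1 1)*(g 1 0 1)*(g 2 0 0) + (1/12)*s2*s3*c*(g 0 1 1)*(g 1 0 0)*(g 2 0 1) + (-1/48)*s2*s3*c*(g 0 1 1)*(g 1 0 0)*(g 2 0 0) + (1/12)*s2*s3*c*(g 0 1 0)*(g 1 0 1)*(g 2 0 1) + (-1/8)*s2*s3*c*(g 0 1 0)*(g 1 0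 1)*(g 2 0 0) + (1/12)*s2*s3*c*(g 0 1 0)*(g 1 0 0)*(g 2 0 1) + (-7/48)*s2*s3*I*c*(g 0 1 1)*(g 1 0 1)*(g 2 0 0) + (1/12)*s2*s3*I*c*(g 0 1 1)*(g 1 0 0)*(g 2 0 1) + (-1/12)*s2*s3*I*c*(g 0 1 1)*(g 1 0 0)*(g 2 0 0) + (-1/16)*s2*s3*I^2*c*(g 0 1 1)*(g 1 0 1)*(g 2 0 0) + (-5/48)*s2*s3*I^2*c*(g 0 1 1)*(g 1 0 0)*(g 2 0 0) + (1/12)*s2*s3*I^3*c*(g 0 1 1)*(g 1 0 1)*(g 2 0 1) + (-1/16)*s2*s3*I^3*c*(g 0 1 1)*(g 1 0 1)*(g 2 0 0) + (-1/12)*s2*s3*I^3*c*(g 0 1 1)*(g 1 0 0)*(g 2 0 1) + (-3/32)*s2*s3*I^4*c*(g 0 1 1)*(g 1 0 1)*(g 2 0 0) + (-1/12)*s2*s3*I^5*c*(g 0 1 1)*(g 1 0 1)*(g 2 0 1))*Complex.I_sq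
  have t5 : A1*B0*C1 + D1*E0*F1 = 0 := by
    rw [hA1, hB0, hC1, hD1, hE0, hF1]
    linear_combination -h5 + ((-1/192)*s3*c*(g 0 1 1)*(g 1 0 1)*(g 2 1 1) + (1/12)*s3*c*(g 0 1 1)*(g 1 0 1)*(g 2 1 0) + (-5/96)*s3*c*(g 0 1 1)*(g 1 0 0)*(g 2 1 1) + (-1/48)*s3*c*(g 0 1 0)*(g 1 0 1)*(g 2 1 1) + (1/12)*s3*c*(g 0 1 0)*(g 1 0 1)*(g 2 1 0) + (-5/64)*s3*I*c*(g 0 1 1)*(g 1 0 1)*(g 2 1 1) + (-3/32)*s3*I*c*(g 0 1 1)*(g 1 0 0)*(g 2 1 1) + (-1/48)*s3*I*c*(g 0 1 0)*(g 1 0 1)*(g 2 1 1) + (-29/192)*s3*I^2*c*(g 0 1 1)*(g 1 0 1)*(g 2 1 1) + (1/12)*s3*I^2*c*(g 0 1 1)*(g 1 0 1)*(g 2 1 0) + (-5/48)*s3*I^2*c*(g 0 1 1)*(g 1 0 0)*(g 2 1 1) + (-1/48)*s3*I^2*c*(g 0 1 0)*(g 1 0 1)*(g 2 1 1) + (1/12)*s3*I^2*c*(g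 0 1 0)*(g 1 0 1)*(g 2 1 0) + (-35/192)*s3*I^3*c*(g 0 1 1)*(g 1 0 1)*(g 2 1 1) + (-5/48)*s3*I^3*c*(g 0 1 1)*(g 1 0 0)*(g 2 1 1) + (-1/48)*s3*I^3*c*(g 0 1 0)*(g 1 0 1)*(g 2 1 1) + (-35/192)*s3*I^4*c*(g 0 1 1)*(g 1 0 1)*(g 2 1 1) + (-5/96)*s3*I^4*c*(g 0 1 1)*(g 1 0 0)*(g 2 1 1) + (-7/64)*s3*I^5*c*(g 0 1 1)*(g 1 0 1)*(g 2 1 1) + (-1/96)*s3*I^5*c*(g 0 1 1)*(g 1 0 0)*(g 2 1 1) + (-7/192)*s3*I^6*c*(g 0 1 1)*(g 1 0 1)*(g 2 1 1) + (-1/192)*s3*I^7*c*(g 0 1 1)*(g 1 0 1)*(g 2 1 1) + (-1/192)*s2*s3*c*(g 0 1 1)*(g 1 0 1)*(g 2 1 0) + (7/96)*s2*s3*c*(g 0 1 1)*(g 1 0 0)*(g 2 1 0) + (-1/48)*s2*s3*c*(g 0 1 0)*(g 1 0 1)*(g 2 1 0) + (1/12)*s2*s3*c*(g 0 1 0)*(g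 1 0 0)*(g 2 1 0) + (-1/32)*s2*s3*I*c*(g 0 1 1)*(g 1 0 1)*(g 2 1 0) + (1/24)*s2*s3*I*c*(g 0 1 1)*(g 1 0 0)*(g 2 1 1) + (-1/24)*s2*s3*I*c*(g 0 1 1)*(g 1 0 0)*(g 2 1 0) + (-1/24)*s2*s3*I*c*(g 0 1 0)*(g 1 0 1)*(g 2 1 0) + (1/24)*s2*s3*I*c*(g 0 1 0)*(g 1 0 0)*(g 2 1 1) + (1/24)*s2*s3*I^2*c*(g 0 1 1)*(g 1 0 1)*(g 2 1 1) + (-5/64)*s2*s3*I^2*c*(g 0 1 1)*(g 1 0 1)*(g 2 1 0) + (1/24)*s2*s3*I^2*c*(g 0 1 1)*(g 1 0 0)*(g 2 1 1) + (-1/16)*s2*s3*I^2*c*(g 0 1 1)*(g 1 0 0)*(g 2 1 0) + (1/24)*s2*s3*I^2*c*(g 0 1 0)*(g 1 0 1)*(g 2 1 1) + (-1/48)*s2*s3*I^2*c*(g 0 1 0)*(g 1 0 1)*(g 2 1 0) + (1/24)*s2*s3*I^2*c*(g 0 1 0)*(g 1 0 0)*(g 2 1 1) + (1/24)*s2*s3*I^3*c*(g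 0 1 1)*(g 1 0 1)*(g 2 1 1) + (-5/48)*s2*s3*I^3*c*(g 0 1 1)*(g 1 0 1)*(g 2 1 0) + (-1/24)*s2*s3*I^3*c*(g 0 1 1)*(g 1 0 0)*(g 2 1 0) + (1/24)*s2*s3*I^3*c*(g 0 1 0)*(g 1 0 1)*(g 2 1 1) + (-5/64)*s2*s3*I^4*c*(g 0 1 1)*(g 1 0 1)*(g 2 1 0) + (-1/96)*s2*s3*I^4*c*(g 0 1 1)*(g 1 0 0)*(g 2 1 0) + (-1/32)*s2*s3*I^5*c*(g 0 1 1)*(g 1 0 1)*(g 2 1 0) + (-1/192)*s2*s3*I^6*c*(g 0 1 1)*(g 1 0 1)*(g 2 1 0) + (-1/384)*s2^2*s3*c*(g 0 1 1)*(g 1 0 1)*(g 2 1 1) + (-1/192)*s2^2*s3*c*(g 0 1 1)*(g 1 0 0)*(g 2 1 1) + (-1/96)*s2^2*s3*c*(g 0 1 0)*(g 1 0 1)*(g 2 1 1) + (-7/384)*s2^2*s3*I*c*(g 0 1 1)*(g 1 0 1)*(g 2 1 1) + (-5/192)*s2^2*s3*I*c*(g 0 1 1)*(g 1 0 0)*(g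 2 1 1) + (-1/32)*s2^2*s3*I*c*(g 0 1 0)*(g 1 0 1)*(g 2 1 1) + (-7/128)*s2^2*s3*I^2*c*(g 0 1 1)*(g 1 0 1)*(g 2 1 1) + (-5/96)*s2^2*s3*I^2*c*(g 0 1 1)*(g 1 0 0)*(g 2 1 1) + (-1/32)*s2^2*s3*I^2*c*(g 0 1 0)*(g 1 0 1)*(g 2 1 1) + (-35/384)*s2^2*s3*I^3*c*(g 0 1 1)*(g 1 0 1)*(g 2 1 1) + (-5/96)*s2^2*s3*I^3*c*(g 0 1 1)*(g 1 0 0)*(g 2 1 1) + (-1/96)*s2^2*s3*I^3*c*(g 0 1 0)*(g 1 0 1)*(g 2 1 1) + (-35/384)*s2^2*s3*I^4*c*(g 0 1 1)*(g 1 0 1)*(g 2 1 1) + (-5/192)*s2^2*s3*I^4*c*(g 0 1 1)*(g 1 0 0)*(g 2 1 1) + (-7/128)*s2^2*s3*I^5*c*(g 0 1 1)*(g 1 0 1)*(g 2 1 1) + (-1/192)*s2^2*s3*I^5*c*(g 0 1 1)*(g 1 0 0)*(g 2 1 1) + (-7/384)*s2^2*s3*I^6*c*(g 0 1 1)*(g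 1 0 1)*(g 2 1 1) + (-1/384)*s2^2*s3*I^7*c*(g 0 1 1)*(g 1 0 1)*(g 2 1 1) + (-1/384)*s2^3*s3*c*(g 0 1 1)*(g 1 0 1)*(g 2 1 0) + (-1/192)*s2^3*s3*c*(g 0 1 1)*(g 1 0 0)*(g 2 1 0) + (-1/64)*s2^3*s3*I*c*(g 0 1 1)*(g 1 0 1)*(g 2 1 0) + (-1/48)*s2^3*s3*I*c*(g 0 1 1)*(g 1 0 0)*(g 2 1 0) + (-5/128)*s2^3*s3*I^2*c*(g 0 1 1)*(g 1 0 1)*(g 2 1 0) + (-1/32)*s2^3*s3*I^2*c*(g 0 1 1)*(g 1 0 0)*(g 2 1 0) + (-5/96)*s2^3*s3*I^3*c*(g 0 1 1)*(g 1 0 1)*(g 2 1 0) + (-1/48)*s2^3*s3*I^3*c*(g 0 1 1)*(g 1 0 0)*(g 2 1 0) + (-5/128)*s2^3*s3*I^4*c*(g 0 1 1)*(g 1 0 1)*(g 2 1 0) + (-1/192)*s2^3*s3*I^4*c*(g 0 1 1)*(g 1 0 0)*(g 2 1 0) + (-1/64)*s2^3*s3*I^5*c*(g 0 1 1)*(g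 1 0 1)*(g 2 1 0) + (-1/384)*s2^3*s3*I^6*c*(g 0 1 1)*(g 1 0 1)*(g 2 1 0) + (-1/768)*s2^4*s3*c*(g 0 1 1)*(g 1 0 1)*(g 2 1 1) + (-1/384)*s2^4*s3*c*(g 0 1 1)*(g 1 0 0)*(g 2 1 1) + (-7/768)*s2^4*s3*I*c*(g 0 1 1)*(g 1 0 1)*(g 2 1 1) + (-5/384)*s2^4*s3*I*c*(g 0 1 1)*(g 1 0 0)*(g 2 1 1) + (-7/256)*s2^4*s3*I^2*c*(g 0 1 1)*(g 1 0 1)*(g 2 1 1) + (-5/192)*s2^4*s3*I^2*c*(g 0 1 1)*(g 1 0 0)*(g 2 1 1) + (-35/768)*s2^4*s3*I^3*c*(g 0 1 1)*(g 1 0 1)*(g 2 1 1) + (-5/192)*s2^4*s3*I^3*c*(g 0 1 1)*(g 1 0 0)*(g 2 1 1) + (-35/768)*s2^4*s3*I^4*c*(g 0 1 1)*(g 1 0 1)*(g 2 1 1) + (-5/384)*s2^4*s3*I^4*c*(g 0 1 1)*(g 1 0 0)*(g 2 1 1) + (-7/256)*s2^4*s3*I^5*c*(g 0 1 1)*(g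 1 0 1)*(g 2 1 1) + (-1/384)*s2^4*s3*I^5*c*(g 0 1 1)*(g 1 0 0)*(g 2 1 1) + (-7/768)*s2^4*s3*I^6*c*(g 0 1 1)*(g 1 0 1)*(g 2 1 1) + (-1/768)*s2^4*s3*I^7*c*(g 0 1 1)*(g 1 0 1)*(g 2 1 1) + (-1/768)*s2^5*s3*c*(g 0 1 1)*(g 1 0 1)*(g 2 1 0) + (-1/128)*s2^5*s3*I*c*(g 0 1 1)*(g 1 0 1)*(g 2 1 0) + (-5/256)*s2^5*s3*I^2*c*(g 0 1 1)*(g 1 0 1)*(g 2 1 0) + (-5/192)*s2^5*s3*I^3*c*(g 0 1 1)*(g 1 0 1)*(g 2 1 0) + (-5/256)*s2^5*s3*I^4*c*(g 0 1 1)*(g 1 0 1)*(g 2 1 0) + (-1/128)*s2^5*s3*I^5*c*(g 0 1 1)*(g 1 0 1)*(g 2 1 0) + (-1/768)*s2^5*s3*I^6*c*(g 0 1 1)*(g 1 0 1)*(g 2 1 0) + (-1/1536)*s2^6*s3*c*(g 0 1 1)*(g 1 0 1)*(g 2 1 1) + (-7/1536)*s2^6*s3*I*c*(g 0 1 1)*(g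 1 0 1)*(g 2 1 1) + (-7/512)*s2^6*s3*I^2*c*(g 0 1 1)*(g 1 0 1)*(g 2 1 1) + (-35/1536)*s2^6*s3*I^3*c*(g 0 1 1)*(g 1 0 1)*(g 2 1 1) + (-35/1536)*s2^6*s3*I^4*c*(g 0 1 1)*(g 1 0 1)*(g 2 1 1) + (-7/512)*s2^6*s3*I^5*c*(g 0 1 1)*(g 1 0 1)*(g 2 1 1) + (-7/1536)*s2^6*s3*I^6*c*(g 0 1 1)*(g 1 0 1)*(g 2 1 1) + (-1/1536)*s2^6*s3*I^7*c*(g 0 1 1)*(g 1 0 1)*(g 2 1 1))*hs2 + (0)*hs3 + ((-1/96)*s3*c*(g 0 1 1)*(g 1 0 1)*(g 2 1 1) + (1/6)*s3*c*(g 0 1 1)*(g 1 0 1)*(g 2 1 0) + (-5/48)*s3*c*(g 0 1 1)*(g 1 0 0)*(g 2 1 1) + (-1/24)*s3*c*(g 0 1 0)*(g 1 0 1)*(g 2 1 1) + (1/6)*s3*c*(g 0 1 0)*(g 1 0 1)*(g 2 1 0) + (-5/32)*s3*I*c*(g 0 1 1)*(g 1 0 1)*(g 2 1 1) + (-3/16)*s3*I*c*(g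 0 1 1)*(g 1 0 0)*(g 2 1 1) + (-1/24)*s3*I*c*(g 0 1 0)*(g 1 0 1)*(g 2 1 1) + (-7/24)*s3*I^2*c*(g 0 1 1)*(g 1 0 1)*(g 2 1 1) + (-5/48)*s3*I^2*c*(g 0 1 1)*(g 1 0 0)*(g 2 1 1) + (-5/24)*s3*I^3*c*(g 0 1 1)*(g 1 0 1)*(g 2 1 1) + (-1/48)*s3*I^3*c*(g 0 1 1)*(g 1 0 0)*(g 2 1 1) + (-7/96)*s3*I^4*c*(g 0 1 1)*(g 1 0 1)*(g 2 1 1) + (-1/96)*s3*I^5*c*(g 0 1 1)*(g 1 0 1)*(g 2 1 1) + (1/12)*s2*s3*c*(g 0 1 1)*(g 1 0 1)*(g 2 1 1) + (-3/32)*s2*s3*c*(g 0 1 1)*(g 1 0 1)*(g 2 1 0) + (1/12)*s2*s3*c*(g 0 1 1)*(g 1 0 0)*(g 2 1 1) + (-1/48)*s2*s3*c*(g 0 1 1)*(g 1 0 0)*(g 2 1 0) + (1/12)*s2*s3*c*(g 0 1 0)*(g 1 0 1)*(g 2 1 1) + (-1/8)*s2*s3*c*(g 0 1 0)*(g 1 0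 1)*(g 2 1 0) + (1/12)*s2*s3*c*(g 0 1 0)*(g 1 0 0)*(g 2 1 1) + (-7/48)*s2*s3*I*c*(g 0 1 1)*(g 1 0 1)*(g 2 1 0) + (1/12)*s2*s3*I*c*(g 0 1 1)*(g 1 0 0)*(g 2 1 1) + (-1/12)*s2*s3*I*c*(g 0 1 1)*(g 1 0 0)*(g 2 1 0) + (-1/16)*s2*s3*I^2*c*(g 0 1 1)*(g 1 0 1)*(g 2 1 0) + (-5/48)*s2*s3*I^2*c*(g 0 1 1)*(g 1 0 0)*(g 2 1 0) + (1/12)*s2*s3*I^3*c*(g 0 1 1)*(g 1 0 1)*(g 2 1 1) + (-1/16)*s2*s3*I^3*c*(g 0 1 1)*(g 1 0 1)*(g 2 1 0) + (-1/12)*s2*s3*I^3*c*(g 0 1 1)*(g 1 0 0)*(g 2 1 1) + (-3/32)*s2*s3*I^4*c*(g 0 1 1)*(g 1 0 1)*(g 2 1 0) + (-1/12)*s2*s3*I^5*c*(g 0 1 1)*(g 1 0 1)*(g 2 1 1))*Complex.I_sq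
  have t6 : A1*B1*C0 + D1*E1*F0 = 0 := by
    rw [hA1, hB1, hC0, hD1, hE1, hF0]
    linear_combination -h6 + ((-1/192)*s3*c*(g 0 1 1)*(g 1 1 1)*(g 2 0 1) + (1/12)*s3*c*(g 0 1 1)*(g 1 1 1)*(g 2 0 0) + (-5/96)*s3*c*(g 0 1 1)*(g 1 1 0)*(g 2 0 1) + (-1/48)*s3*c*(g 0 1 0)*(g 1 1 1)*(g 2 0 1) + (1/12)*s3*c*(g 0 1 0)*(g 1 1 1)*(g 2 0 0) + (-5/64)*s3*I*c*(g 0 1 1)*(g 1 1 1)*(g 2 0 1) + (-3/32)*s3*I*c*(g 0 1 1)*(g 1 1 0)*(g 2 0 1) + (-1/48)*s3*I*c*(g 0 1 0)*(g 1 1 1)*(g 2 0 1) + (-29/192)*s3*I^2*c*(g 0 1 1)*(g 1 1 1)*(g 2 0 1) + (1/12)*s3*I^2*c*(g 0 1 1)*(g 1 1 1)*(g 2 0 0) + (-5/48)*s3*I^2*c*(g 0 1 1)*(g 1 1 0)*(g 2 0 1) + (-1/48)*s3*I^2*c*(g 0 1 0)*(g 1 1 1)*(g 2 0 1) + (1/12)*s3*I^2*c*(g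 0 1 0)*(g 1 1 1)*(g 2 0 0) + (-35/192)*s3*I^3*c*(g 0 1 1)*(g 1 1 1)*(g 2 0 1) + (-5/48)*s3*I^3*c*(g 0 1 1)*(g 1 1 0)*(g 2 0 1) + (-1/48)*s3*I^3*c*(g 0 1 0)*(g 1 1 1)*(g 2 0 1) + (-35/192)*s3*I^4*c*(g 0 1 1)*(g 1 1 1)*(g 2 0 1) + (-5/96)*s3*I^4*c*(g 0 1 1)*(g 1 1 0)*(g 2 0 1) + (-7/64)*s3*I^5*c*(g 0 1 1)*(g 1 1 1)*(g 2 0 1) + (-1/96)*s3*I^5*c*(g 0 1 1)*(g 1 1 0)*(g 2 0 1) + (-7/192)*s3*I^6*c*(g 0 1 1)*(g 1 1 1)*(g 2 0 1) + (-1/192)*s3*I^7*c*(g 0 1 1)*(g 1 1 1)*(g 2 0 1) + (-1/192)*s2*s3*c*(g 0 1 1)*(g 1 1 1)*(g 2 0 0) + (7/96)*s2*s3*c*(g 0 1 1)*(g 1 1 0)*(g 2 0 0) + (-1/48)*s2*s3*c*(g 0 1 0)*(g 1 1 1)*(g 2 0 0) + (1/12)*s2*s3*c*(g 0 1 0)*(g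 1 1 0)*(g 2 0 0) + (-1/32)*s2*s3*I*c*(g 0 1 1)*(g 1 1 1)*(g 2 0 0) + (1/24)*s2*s3*I*c*(g 0 1 1)*(g 1 1 0)*(g 2 0 1) + (-1/24)*s2*s3*I*c*(g 0 1 1)*(g 1 1 0)*(g 2 0 0) + (-1/24)*s2*s3*I*c*(g 0 1 0)*(g 1 1 1)*(g 2 0 0) + (1/24)*s2*s3*I*c*(g 0 1 0)*(g 1 1 0)*(g 2 0 1) + (1/24)*s2*s3*I^2*c*(g 0 1 1)*(g 1 1 1)*(g 2 0 1) + (-5/64)*s2*s3*I^2*c*(g 0 1 1)*(g 1 1 1)*(g 2 0 0) + (1/24)*s2*s3*I^2*c*(g 0 1 1)*(g 1 1 0)*(g 2 0 1) + (-1/16)*s2*s3*I^2*c*(g 0 1 1)*(g 1 1 0)*(g 2 0 0) + (1/24)*s2*s3*I^2*c*(g 0 1 0)*(g 1 1 1)*(g 2 0 1) + (-1/48)*s2*s3*I^2*c*(g 0 1 0)*(g 1 1 1)*(g 2 0 0) + (1/24)*s2*s3*I^2*c*(g 0 1 0)*(g 1 1 0)*(g 2 0 1) + (1/24)*s2*s3*I^3*c*(g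 0 1 1)*(g 1 1 1)*(g 2 0 1) + (-5/48)*s2*s3*I^3*c*(g 0 1 1)*(g 1 1 1)*(g 2 0 0) + (-1/24)*s2*s3*I^3*c*(g 0 1 1)*(g 1 1 0)*(g 2 0 0) + (1/24)*s2*s3*I^3*c*(g 0 1 0)*(g 1 1 1)*(g 2 0 1) + (-5/64)*s2*s3*I^4*c*(g 0 1 1)*(g 1 1 1)*(g 2 0 0) + (-1/96)*s2*s3*I^4*c*(g 0 1 1)*(g 1 1 0)*(g 2 0 0) + (-1/32)*s2*s3*I^5*c*(g 0 1 1)*(g 1 1 1)*(g 2 0 0) + (-1/192)*s2*s3*I^6*c*(g 0 1 1)*(g 1 1 1)*(g 2 0 0) + (-1/384)*s2^2*s3*c*(g 0 1 1)*(g 1 1 1)*(g 2 0 1) + (-1/192)*s2^2*s3*c*(g 0 1 1)*(g 1 1 0)*(g 2 0 1) + (-1/96)*s2^2*s3*c*(g 0 1 0)*(g 1 1 1)*(g 2 0 1) + (-7/384)*s2^2*s3*I*c*(g 0 1 1)*(g 1 1 1)*(g 2 0 1) + (-5/192)*s2^2*s3*I*c*(g 0 1 1)*(g 1 1 0)*(g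 2 0 1) + (-1/32)*s2^2*s3*I*c*(g 0 1 0)*(g 1 1 1)*(g 2 0 1) + (-7/128)*s2^2*s3*I^2*c*(g 0 1 1)*(g 1 1 1)*(g 2 0 1) + (-5/96)*s2^2*s3*I^2*c*(g 0 1 1)*(g 1 1 0)*(g 2 0 1) + (-1/32)*s2^2*s3*I^2*c*(g 0 1 0)*(g 1 1 1)*(g 2 0 1) + (-35/384)*s2^2*s3*I^3*c*(g 0 1 1)*(g 1 1 1)*(g 2 0 1) + (-5/96)*s2^2*s3*I^3*c*(g 0 1 1)*(g 1 1 0)*(g 2 0 1) + (-1/96)*s2^2*s3*I^3*c*(g 0 1 0)*(g 1 1 1)*(g 2 0 1) + (-35/384)*s2^2*s3*I^4*c*(g 0 1 1)*(g 1 1 1)*(g 2 0 1) + (-5/192)*s2^2*s3*I^4*c*(g 0 1 1)*(g 1 1 0)*(g 2 0 1) + (-7/128)*s2^2*s3*I^5*c*(g 0 1 1)*(g 1 1 1)*(g 2 0 1) + (-1/192)*s2^2*s3*I^5*c*(g 0 1 1)*(g 1 1 0)*(g 2 0 1) + (-7/384)*s2^2*s3*I^6*c*(g 0 1 1)*(g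 1 1 1)*(g 2 0 1) + (-1/384)*s2^2*s3*I^7*c*(g 0 1 1)*(g 1 1 1)*(g 2 0 1) + (-1/384)*s2^3*s3*c*(g 0 1 1)*(g 1 1 1)*(g 2 0 0) + (-1/192)*s2^3*s3*c*(g 0 1 1)*(g 1 1 0)*(g 2 0 0) + (-1/64)*s2^3*s3*I*c*(g 0 1 1)*(g 1 1 1)*(g 2 0 0) + (-1/48)*s2^3*s3*I*c*(g 0 1 1)*(g 1 1 0)*(g 2 0 0) + (-5/128)*s2^3*s3*I^2*c*(g 0 1 1)*(g 1 1 1)*(g 2 0 0) + (-1/32)*s2^3*s3*I^2*c*(g 0 1 1)*(g 1 1 0)*(g 2 0 0) + (-5/96)*s2^3*s3*I^3*c*(g 0 1 1)*(g 1 1 1)*(g 2 0 0) + (-1/48)*s2^3*s3*I^3*c*(g 0 1 1)*(g 1 1 0)*(g 2 0 0) + (-5/128)*s2^3*s3*I^4*c*(g 0 1 1)*(g 1 1 1)*(g 2 0 0) + (-1/192)*s2^3*s3*I^4*c*(g 0 1 1)*(g 1 1 0)*(g 2 0 0) + (-1/64)*s2^3*s3*I^5*c*(g 0 1 1)*(g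 1 1 1)*(g 2 0 0) + (-1/384)*s2^3*s3*I^6*c*(g 0 1 1)*(g 1 1 1)*(g 2 0 0) + (-1/768)*s2^4*s3*c*(g 0 1 1)*(g 1 1 1)*(g 2 0 1) + (-1/384)*s2^4*s3*c*(g 0 1 1)*(g 1 1 0)*(g 2 0 1) + (-7/768)*s2^4*s3*I*c*(g 0 1 1)*(g 1 1 1)*(g 2 0 1) + (-5/384)*s2^4*s3*I*c*(g 0 1 1)*(g 1 1 0)*(g 2 0 1) + (-7/256)*s2^4*s3*I^2*c*(g 0 1 1)*(g 1 1 1)*(g 2 0 1) + (-5/192)*s2^4*s3*I^2*c*(g 0 1 1)*(g 1 1 0)*(g 2 0 1) + (-35/768)*s2^4*s3*I^3*c*(g 0 1 1)*(g 1 1 1)*(g 2 0 1) + (-5/192)*s2^4*s3*I^3*c*(g 0 1 1)*(g 1 1 0)*(g 2 0 1) + (-35/768)*s2^4*s3*I^4*c*(g 0 1 1)*(g 1 1 1)*(g 2 0 1) + (-5/384)*s2^4*s3*I^4*c*(g 0 1 1)*(g 1 1 0)*(g 2 0 1) + (-7/256)*s2^4*s3*I^5*c*(g 0 1 1)*(g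 1 1 1)*(g 2 0 1) + (-1/384)*s2^4*s3*I^5*c*(g 0 1 1)*(g 1 1 0)*(g 2 0 1) + (-7/768)*s2^4*s3*I^6*c*(g 0 1 1)*(g 1 1 1)*(g 2 0 1) + (-1/768)*s2^4*s3*I^7*c*(g 0 1 1)*(g 1 1 1)*(g 2 0 1) + (-1/768)*s2^5*s3*c*(g 0 1 1)*(g 1 1 1)*(g 2 0 0) + (-1/128)*s2^5*s3*I*c*(g 0 1 1)*(g 1 1 1)*(g 2 0 0) + (-5/256)*s2^5*s3*I^2*c*(g 0 1 1)*(g 1 1 1)*(g 2 0 0) + (-5/192)*s2^5*s3*I^3*c*(g 0 1 1)*(g 1 1 1)*(g 2 0 0) + (-5/256)*s2^5*s3*I^4*c*(g 0 1 1)*(g 1 1 1)*(g 2 0 0) + (-1/128)*s2^5*s3*I^5*c*(g 0 1 1)*(g 1 1 1)*(g 2 0 0) + (-1/768)*s2^5*s3*I^6*c*(g 0 1 1)*(g 1 1 1)*(g 2 0 0) + (-1/1536)*s2^6*s3*c*(g 0 1 1)*(g 1 1 1)*(g 2 0 1) + (-7/1536)*s2^6*s3*I*c*(g 0 1 1)*(g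 1 1 1)*(g 2 0 1) + (-7/512)*s2^6*s3*I^2*c*(g 0 1 1)*(g 1 1 1)*(g 2 0 1) + (-35/1536)*s2^6*s3*I^3*c*(g 0 1 1)*(g 1 1 1)*(g 2 0 1) + (-35/1536)*s2^6*s3*I^4*c*(g 0 1 1)*(g 1 1 1)*(g 2 0 1) + (-7/512)*s2^6*s3*I^5*c*(g 0 1 1)*(g 1 1 1)*(g 2 0 1) + (-7/1536)*s2^6*s3*I^6*c*(g 0 1 1)*(g 1 1 1)*(g 2 0 1) + (-1/1536)*s2^6*s3*I^7*c*(g 0 1 1)*(g 1 1 1)*(g 2 0 1))*hs2 + (0)*hs3 + ((-1/96)*s3*c*(g 0 1 1)*(g 1 1 1)*(g 2 0 1) + (1/6)*s3*c*(g 0 1 1)*(g 1 1 1)*(g 2 0 0) + (-5/48)*s3*c*(g 0 1 1)*(g 1 1 0)*(g 2 0 1) + (-1/24)*s3*c*(g 0 1 0)*(g 1 1 1)*(g 2 0 1) + (1/6)*s3*c*(g 0 1 0)*(g 1 1 1)*(g 2 0 0) + (-5/32)*s3*I*c*(g 0 1 1)*(g 1 1 1)*(g 2 0 1) + (-3/16)*s3*I*c*(g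 0 1 1)*(g 1 1 0)*(g 2 0 1) + (-1/24)*s3*I*c*(g 0 1 0)*(g 1 1 1)*(g 2 0 1) + (-7/24)*s3*I^2*c*(g 0 1 1)*(g 1 1 1)*(g 2 0 1) + (-5/48)*s3*I^2*c*(g 0 1 1)*(g 1 1 0)*(g 2 0 1) + (-5/24)*s3*I^3*c*(g 0 1 1)*(g 1 1 1)*(g 2 0 1) + (-1/48)*s3*I^3*c*(g 0 1 1)*(g 1 1 0)*(g 2 0 1) + (-7/96)*s3*I^4*c*(g 0 1 1)*(g 1 1 1)*(g 2 0 1) + (-1/96)*s3*I^5*c*(g 0 1 1)*(g 1 1 1)*(g 2 0 1) + (1/12)*s2*s3*c*(g 0 1 1)*(g 1 1 1)*(g 2 0 1) + (-3/32)*s2*s3*c*(g 0 1 1)*(g 1 1 1)*(g 2 0 0) + (1/12)*s2*s3*c*(g 0 1 1)*(g 1 1 0)*(g 2 0 1) + (-1/48)*s2*s3*c*(g 0 1 1)*(g 1 1 0)*(g 2 0 0) + (1/12)*s2*s3*c*(g 0 1 0)*(g 1 1 1)*(g 2 0 1) + (-1/8)*s2*s3*c*(g 0 1 0)*(g 1 1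 1)*(g 2 0 0) + (1/12)*s2*s3*c*(g 0 1 0)*(g 1 1 0)*(g 2 0 1) + (-7/48)*s2*s3*I*c*(g 0 1 1)*(g 1 1 1)*(g 2 0 0) + (1/12)*s2*s3*I*c*(g 0 1 1)*(g 1 1 0)*(g 2 0 1) + (-1/12)*s2*s3*I*c*(g 0 1 1)*(g 1 1 0)*(g 2 0 0) + (-1/16)*s2*s3*I^2*c*(g 0 1 1)*(g 1 1 1)*(g 2 0 0) + (-5/48)*s2*s3*I^2*c*(g 0 1 1)*(g 1 1 0)*(g 2 0 0) + (1/12)*s2*s3*I^3*c*(g 0 1 1)*(g 1 1 1)*(g 2 0 1) + (-1/16)*s2*s3*I^3*c*(g 0 1 1)*(g 1 1 1)*(g 2 0 0) + (-1/12)*s2*s3*I^3*c*(g 0 1 1)*(g 1 1 0)*(g 2 0 1) + (-3/32)*s2*s3*I^4*c*(g 0 1 1)*(g 1 1 1)*(g 2 0 0) + (-1/12)*s2*s3*I^5*c*(g 0 1 1)*(g 1 1 1)*(g 2 0 1))*Complex.I_sq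
  have t7 : A1*B1*C1 + D1*E1*F1 = 0 := by
    rw [hA1, hB1, hC1, hD1, hE1, hF1]
    linear_combination -h7 + ((-1/192)*s3*c*(g 0 1 1)*(g 1 1 1)*(g 2 1 1) + (1/12)*s3*c*(g 0 1 1)*(g 1 1 1)*(g 2 1 0) + (-5/96)*s3*c*(g 0 1 1)*(g 1 1 0)*(g 2 1 1) + (-1/48)*s3*c*(g 0 1 0)*(g 1 1 1)*(g 2 1 1) + (1/12)*s3*c*(g 0 1 0)*(g 1 1 1)*(g 2 1 0) + (-5/64)*s3*I*c*(g 0 1 1)*(g 1 1 1)*(g 2 1 1) + (-3/32)*s3*I*c*(g 0 1 1)*(g 1 1 0)*(g 2 1 1) + (-1/48)*s3*I*c*(g 0 1 0)*(g 1 1 1)*(g 2 1 1) + (-29/192)*s3*I^2*c*(g 0 1 1)*(g 1 1 1)*(g 2 1 1) + (1/12)*s3*I^2*c*(g 0 1 1)*(g 1 1 1)*(g 2 1 0) + (-5/48)*s3*I^2*c*(g 0 1 1)*(g 1 1 0)*(g 2 1 1) + (-1/48)*s3*I^2*c*(g 0 1 0)*(g 1 1 1)*(g 2 1 1) + (1/12)*s3*I^2*c*(g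 0 1 0)*(g 1 1 1)*(g 2 1 0) + (-35/192)*s3*I^3*c*(g 0 1 1)*(g 1 1 1)*(g 2 1 1) + (-5/48)*s3*I^3*c*(g 0 1 1)*(g 1 1 0)*(g 2 1 1) + (-1/48)*s3*I^3*c*(g 0 1 0)*(g 1 1 1)*(g 2 1 1) + (-35/192)*s3*I^4*c*(g 0 1 1)*(g 1 1 1)*(g 2 1 1) + (-5/96)*s3*I^4*c*(g 0 1 1)*(g 1 1 0)*(g 2 1 1) + (-7/64)*s3*I^5*c*(g 0 1 1)*(g 1 1 1)*(g 2 1 1) + (-1/96)*s3*I^5*c*(g 0 1 1)*(g 1 1 0)*(g 2 1 1) + (-7/192)*s3*I^6*c*(g 0 1 1)*(g 1 1 1)*(g 2 1 1) + (-1/192)*s3*I^7*c*(g 0 1 1)*(g 1 1 1)*(g 2 1 1) + (-1/192)*s2*s3*c*(g 0 1 1)*(g 1 1 1)*(g 2 1 0) + (7/96)*s2*s3*c*(g 0 1 1)*(g 1 1 0)*(g 2 1 0) + (-1/48)*s2*s3*c*(g 0 1 0)*(g 1 1 1)*(g 2 1 0) + (1/12)*s2*s3*c*(g 0 1 0)*(g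 1 1 0)*(g 2 1 0) + (-1/32)*s2*s3*I*c*(g 0 1 1)*(g 1 1 1)*(g 2 1 0) + (1/24)*s2*s3*I*c*(g 0 1 1)*(g 1 1 0)*(g 2 1 1) + (-1/24)*s2*s3*I*c*(g 0 1 1)*(g 1 1 0)*(g 2 1 0) + (-1/24)*s2*s3*I*c*(g 0 1 0)*(g 1 1 1)*(g 2 1 0) + (1/24)*s2*s3*I*c*(g 0 1 0)*(g 1 1 0)*(g 2 1 1) + (1/24)*s2*s3*I^2*c*(g 0 1 1)*(g 1 1 1)*(g 2 1 1) + (-5/64)*s2*s3*I^2*c*(g 0 1 1)*(g 1 1 1)*(g 2 1 0) + (1/24)*s2*s3*I^2*c*(g 0 1 1)*(g 1 1 0)*(g 2 1 1) + (-1/16)*s2*s3*I^2*c*(g 0 1 1)*(g 1 1 0)*(g 2 1 0) + (1/24)*s2*s3*I^2*c*(g 0 1 0)*(g 1 1 1)*(g 2 1 1) + (-1/48)*s2*s3*I^2*c*(g 0 1 0)*(g 1 1 1)*(g 2 1 0) + (1/24)*s2*s3*I^2*c*(g 0 1 0)*(g 1 1 0)*(g 2 1 1) + (1/24)*s2*s3*I^3*c*(g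 0 1 1)*(g 1 1 1)*(g 2 1 1) + (-5/48)*s2*s3*I^3*c*(g 0 1 1)*(g 1 1 1)*(g 2 1 0) + (-1/24)*s2*s3*I^3*c*(g 0 1 1)*(g 1 1 0)*(g 2 1 0) + (1/24)*s2*s3*I^3*c*(g 0 1 0)*(g 1 1 1)*(g 2 1 1) + (-5/64)*s2*s3*I^4*c*(g 0 1 1)*(g 1 1 1)*(g 2 1 0) + (-1/96)*s2*s3*I^4*c*(g 0 1 1)*(g 1 1 0)*(g 2 1 0) + (-1/32)*s2*s3*I^5*c*(g 0 1 1)*(g 1 1 1)*(g 2 1 0) + (-1/192)*s2*s3*I^6*c*(g 0 1 1)*(g 1 1 1)*(g 2 1 0) + (-1/384)*s2^2*s3*c*(g 0 1 1)*(g 1 1 1)*(g 2 1 1) + (-1/192)*s2^2*s3*c*(g 0 1 1)*(g 1 1 0)*(g 2 1 1) + (-1/96)*s2^2*s3*c*(g 0 1 0)*(g 1 1 1)*(g 2 1 1) + (-7/384)*s2^2*s3*I*c*(g 0 1 1)*(g 1 1 1)*(g 2 1 1) + (-5/192)*s2^2*s3*I*c*(g 0 1 1)*(g 1 1 0)*(g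 2 1 1) + (-1/32)*s2^2*s3*I*c*(g 0 1 0)*(g 1 1 1)*(g 2 1 1) + (-7/128)*s2^2*s3*I^2*c*(g 0 1 1)*(g 1 1 1)*(g 2 1 1) + (-5/96)*s2^2*s3*I^2*c*(g 0 1 1)*(g 1 1 0)*(g 2 1 1) + (-1/32)*s2^2*s3*I^2*c*(g 0 1 0)*(g 1 1 1)*(g 2 1 1) + (-35/384)*s2^2*s3*I^3*c*(g 0 1 1)*(g 1 1 1)*(g 2 1 1) + (-5/96)*s2^2*s3*I^3*c*(g 0 1 1)*(g 1 1 0)*(g 2 1 1) + (-1/96)*s2^2*s3*I^3*c*(g 0 1 0)*(g 1 1 1)*(g 2 1 1) + (-35/384)*s2^2*s3*I^4*c*(g 0 1 1)*(g 1 1 1)*(g 2 1 1) + (-5/192)*s2^2*s3*I^4*c*(g 0 1 1)*(g 1 1 0)*(g 2 1 1) + (-7/128)*s2^2*s3*I^5*c*(g 0 1 1)*(g 1 1 1)*(g 2 1 1) + (-1/192)*s2^2*s3*I^5*c*(g 0 1 1)*(g 1 1 0)*(g 2 1 1) + (-7/384)*s2^2*s3*I^6*c*(g 0 1 1)*(g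 1 1 1)*(g 2 1 1) + (-1/384)*s2^2*s3*I^7*c*(g 0 1 1)*(g 1 1 1)*(g 2 1 1) + (-1/384)*s2^3*s3*c*(g 0 1 1)*(g 1 1 1)*(g 2 1 0) + (-1/192)*s2^3*s3*c*(g 0 1 1)*(g 1 1 0)*(g 2 1 0) + (-1/64)*s2^3*s3*I*c*(g 0 1 1)*(g 1 1 1)*(g 2 1 0) + (-1/48)*s2^3*s3*I*c*(g 0 1 1)*(g 1 1 0)*(g 2 1 0) + (-5/128)*s2^3*s3*I^2*c*(g 0 1 1)*(g 1 1 1)*(g 2 1 0) + (-1/32)*s2^3*s3*I^2*c*(g 0 1 1)*(g 1 1 0)*(g 2 1 0) + (-5/96)*s2^3*s3*I^3*c*(g 0 1 1)*(g 1 1 1)*(g 2 1 0) + (-1/48)*s2^3*s3*I^3*c*(g 0 1 1)*(g 1 1 0)*(g 2 1 0) + (-5/128)*s2^3*s3*I^4*c*(g 0 1 1)*(g 1 1 1)*(g 2 1 0) + (-1/192)*s2^3*s3*I^4*c*(g 0 1 1)*(g 1 1 0)*(g 2 1 0) + (-1/64)*s2^3*s3*I^5*c*(g 0 1 1)*(g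 1 1 1)*(g 2 1 0) + (-1/384)*s2^3*s3*I^6*c*(g 0 1 1)*(g 1 1 1)*(g 2 1 0) + (-1/768)*s2^4*s3*c*(g 0 1 1)*(g 1 1 1)*(g 2 1 1) + (-1/384)*s2^4*s3*c*(g 0 1 1)*(g 1 1 0)*(g 2 1 1) + (-7/768)*s2^4*s3*I*c*(g 0 1 1)*(g 1 1 1)*(g 2 1 1) + (-5/384)*s2^4*s3*I*c*(g 0 1 1)*(g 1 1 0)*(g 2 1 1) + (-7/256)*s2^4*s3*I^2*c*(g 0 1 1)*(g 1 1 1)*(g 2 1 1) + (-5/192)*s2^4*s3*I^2*c*(g 0 1 1)*(g 1 1 0)*(g 2 1 1) + (-35/768)*s2^4*s3*I^3*c*(g 0 1 1)*(g 1 1 1)*(g 2 1 1) + (-5/192)*s2^4*s3*I^3*c*(g 0 1 1)*(g 1 1 0)*(g 2 1 1) + (-35/768)*s2^4*s3*I^4*c*(g 0 1 1)*(g 1 1 1)*(g 2 1 1) + (-5/384)*s2^4*s3*I^4*c*(g 0 1 1)*(g 1 1 0)*(g 2 1 1) + (-7/256)*s2^4*s3*I^5*c*(g 0 1 1)*(g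 1 1 1)*(g 2 1 1) + (-1/384)*s2^4*s3*I^5*c*(g 0 1 1)*(g 1 1 0)*(g 2 1 1) + (-7/768)*s2^4*s3*I^6*c*(g 0 1 1)*(g 1 1 1)*(g 2 1 1) + (-1/768)*s2^4*s3*I^7*c*(g 0 1 1)*(g 1 1 1)*(g 2 1 1) + (-1/768)*s2^5*s3*c*(g 0 1 1)*(g 1 1 1)*(g 2 1 0) + (-1/128)*s2^5*s3*I*c*(g 0 1 1)*(g 1 1 1)*(g 2 1 0) + (-5/256)*s2^5*s3*I^2*c*(g 0 1 1)*(g 1 1 1)*(g 2 1 0) + (-5/192)*s2^5*s3*I^3*c*(g 0 1 1)*(g 1 1 1)*(g 2 1 0) + (-5/256)*s2^5*s3*I^4*c*(g 0 1 1)*(g 1 1 1)*(g 2 1 0) + (-1/128)*s2^5*s3*I^5*c*(g 0 1 1)*(g 1 1 1)*(g 2 1 0) + (-1/768)*s2^5*s3*I^6*c*(g 0 1 1)*(g 1 1 1)*(g 2 1 0) + (-1/1536)*s2^6*s3*c*(g 0 1 1)*(g 1 1 1)*(g 2 1 1) + (-7/1536)*s2^6*s3*I*c*(g 0 1 1)*(g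 1 1 1)*(g 2 1 1) + (-7/512)*s2^6*s3*I^2*c*(g 0 1 1)*(g 1 1 1)*(g 2 1 1) + (-35/1536)*s2^6*s3*I^3*c*(g 0 1 1)*(g 1 1 1)*(g 2 1 1) + (-35/1536)*s2^6*s3*I^4*c*(g 0 1 1)*(g 1 1 1)*(g 2 1 1) + (-7/512)*s2^6*s3*I^5*c*(g 0 1 1)*(g 1 1 1)*(g 2 1 1) + (-7/1536)*s2^6*s3*I^6*c*(g 0 1 1)*(g 1 1 1)*(g 2 1 1) + (-1/1536)*s2^6*s3*I^7*c*(g 0 1 1)*(g 1 1 1)*(g 2 1 1))*hs2 + (0)*hs3 + ((-1/96)*s3*c*(g 0 1 1)*(g 1 1 1)*(g 2 1 1) + (1/6)*s3*c*(g 0 1 1)*(g 1 1 1)*(g 2 1 0) + (-5/48)*s3*c*(g 0 1 1)*(g 1 1 0)*(g 2 1 1) + (-1/24)*s3*c*(g 0 1 0)*(g 1 1 1)*(g 2 1 1) + (1/6)*s3*c*(g 0 1 0)*(g 1 1 1)*(g 2 1 0) + (-5/32)*s3*I*c*(g 0 1 1)*(g 1 1 1)*(g 2 1 1) + (-3/16)*s3*I*c*(g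 0 1 1)*(g 1 1 0)*(g 2 1 1) + (-1/24)*s3*I*c*(g 0 1 0)*(g 1 1 1)*(g 2 1 1) + (-7/24)*s3*I^2*c*(g 0 1 1)*(g 1 1 1)*(g 2 1 1) + (-5/48)*s3*I^2*c*(g 0 1 1)*(g 1 1 0)*(g 2 1 1) + (-5/24)*s3*I^3*c*(g 0 1 1)*(g 1 1 1)*(g 2 1 1) + (-1/48)*s3*I^3*c*(g 0 1 1)*(g 1 1 0)*(g 2 1 1) + (-7/96)*s3*I^4*c*(g 0 1 1)*(g 1 1 1)*(g 2 1 1) + (-1/96)*s3*I^5*c*(g 0 1 1)*(g 1 1 1)*(g 2 1 1) + (1/12)*s2*s3*c*(g 0 1 1)*(g 1 1 1)*(g 2 1 1) + (-3/32)*s2*s3*c*(g 0 1 1)*(g 1 1 1)*(g 2 1 0) + (1/12)*s2*s3*c*(g 0 1 1)*(g 1 1 0)*(g 2 1 1) + (-1/48)*s2*s3*c*(g 0 1 1)*(g 1 1 0)*(g 2 1 0) + (1/12)*s2*s3*c*(g 0 1 0)*(g 1 1 1)*(g 2 1 1) + (-1/8)*s2*s3*c*(g 0 1 0)*(g 1 1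 1)*(g 2 1 0) + (1/12)*s2*s3*c*(g 0 1 0)*(g 1 1 0)*(g 2 1 1) + (-7/48)*s2*s3*I*c*(g 0 1 1)*(g 1 1 1)*(g 2 1 0) + (1/12)*s2*s3*I*c*(g 0 1 1)*(g 1 1 0)*(g 2 1 1) + (-1/12)*s2*s3*I*c*(g 0 1 1)*(g 1 1 0)*(g 2 1 0) + (-1/16)*s2*s3*I^2*c*(g 0 1 1)*(g 1 1 1)*(g 2 1 0) + (-5/48)*s2*s3*I^2*c*(g 0 1 1)*(g 1 1 0)*(g 2 1 0) + (1/12)*s2*s3*I^3*c*(g 0 1 1)*(g 1 1 1)*(g 2 1 1) + (-1/16)*s2*s3*I^3*c*(g 0 1 1)*(g 1 1 1)*(g 2 1 0) + (-1/12)*s2*s3*I^3*c*(g 0 1 1)*(g 1 1 0)*(g 2 1 1) + (-3/32)*s2*s3*I^4*c*(g 0 1 1)*(g 1 1 1)*(g 2 1 0) + (-1/12)*s2*s3*I^5*c*(g 0 1 1)*(g 1 1 1)*(g 2 1 1))*Complex.I_sq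

  have hk3 : (s3/3 : ℂ) ≠ 0 := div_ne_zero hs3ne (by norm_num)
  have key1 : A0*D0*m = -(s3/3*(s3/3)) := by
    have hid : A0*D0*m = (A0*B0*C0 + D0*E0*F0)*(A0*B1*C1 + D0*E1*F1)
        - (A0*B0*C1 + D0*E0*F1)*(A0*B1*C0 + D0*E1*F0) := by rw [hm]; ring
    rw [hid, t0, t3, t1, t2]; ring
  have key2 : A1*D1*m = 0 := by
    have hid : A1*D1*m = (A1*B0*C0 + D1*E0*F0)*(A1*B1*C1 + D1*E1*F1)
        - (A1*B0*C1 + D1*E0*F1)*(A1*B1*C0 + D1*E1*F0) := by rw [hm]; ring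
    rw [hid, t4, t7, t5, t6]; ring
  have key3 : (A0*D1 + A1*D0)*m = 0 := by
    have hid : (A0*D1 + A1*D0)*m = (A0*B0*C0 + D0*E0*F0)*(A1*B1*C1 + D1*E1*F1)
        + (A1*B0*C0 + D1*E0*F0)*(A0*B1*C1 + D0*E1*F1)
        - (A0*B0*C1 + D0*E0*F1)*(A1*B1*C0 + D1*E1*F0)
        - (A1*B0*C1 + D1*E0*F1)*(A0*B1*C0 + D0*E1*F0) := by rw [hm]; ring
    rw [hid, t0, t7, t4, t3, t1, t6, t5, t2]; ring
  have hne : A0*D0*m ≠ 0 := by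
    rw [key1]; exact neg_ne_zero.2 (mul_ne_zero hk3 hk3)
  have hmne : m ≠ 0 := right_ne_zero_of_mul hne
  have hA0 : A0 ≠ 0 := left_ne_zero_of_mul (left_ne_zero_of_mul hne)
  have hAD : A1*D1 = 0 := by
    rcases mul_eq_zero.mp key2 with h | h
    · exact h
    · exact absurd h hmne
  have hADs : A0*D1 + A1*D0 = 0 := by
    rcases mul_eq_zero.mp key3 with h | h
    · exact h
    · exact absurd h hmne
  have hfin : A1 = 0 ∧ D1 = 0 := by
    rcases mul_eq_zero.mp hAD with h | h
    · refine ⟨h, ?_⟩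
      have : A0*D1 = 0 := by linear_combination hADs - D0*h
      rcases mul_eq_zero.mp this with h' | h'
      · exact absurd h' hA0
      · exact h'
    · constructor
      · have : A1*D0 = 0 := by linear_combination hADs - A0*h
        rcases mul_eq_zero.mp this with h' | h'
        · exact h'
        · -- D0 = 0 contradicts A0*D0*m ≠ 0
          exact absurd (by rw [h']; ring : A0*D0*m = 0) hne
      · exact h
  apply hk3
  rw [← t4, hfin.1, hfin.2]
  ring

end aux

/-- the QFT of the 3-qubit W state is SLOCC-equivalent to `GHZ_3`, in
particular not in the SLOCC orbit of `W`. -/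
theorem stmt_16 :
    SLOCCEquiv 3 (QFT 3 W3) (GHZ 3) ∧ ¬ SLOCCEquiv 3 (QFT 3 W3) W3 :=
  ⟨aux.part1, aux.part2⟩
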